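/- arXiv:2005.01660 — 2 statements merged into one kernel-verified Lean document; each statement's English description precedes it below -/
import Mathlib

section
/- Let ω be a positive weight with lim_n ω_n/ω_{n+1} = 1 and 1 < p < ∞. If g lies in the closure of the multiplier algebra Mult(ℓ^p_A(ω)) inside the space T(ℓ^p_A(ω)) of symbols inducing bounded generalized Volterra operators (with the operator norm ‖T_h‖), then T_g is quasi-nilpotent on ℓ^p_A(ω), i.e., its spectrum is {0}. -/
open scoped ENNReal

/-- `ℓ^p` over `ℕ`, serving as model of the weighted space `ℓ^p_A(ω)` via the natural
isometry `z^n ↦ ω_n^{-1/p} z^n`. -/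
noncomputable abbrev Ellp (p : ℝ) := lp (fun _ : ℕ => ℂ) (ENNReal.ofReal p)

/-- Matrix of the generalized Volterra operator `T_g` on `ℓ^p_A(ω)`, conjugated by the
natural isometry onto `ℓ^p`: entries `((n−k)/n)·ĝ(n−k)·ω_n^{1/p}/ω_k^{1/p}` for
`0 ≤ k < n`, zero otherwise. -/
noncomputable def volMat (p : ℝ) (ω : ℕ → ℝ) (g : ℕ → ℂ) : ℕ → ℕ → ℂ := fun n k =>
  if k < n then
    (((((n : ℝ) - (k : ℝ)) / (n : ℝ)) * (ω n ^ (1 / p) / ω k ^ (1 / p)) : ℝ) : ℂ) *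
      g (n - k)
  else 0

/-- Matrix of the multiplication operator `M_h` on `ℓ^p_A(ω)`, conjugated by the natural
isometry onto `ℓ^p`: entries `ĥ(n−k)·ω_n^{1/p}/ω_k^{1/p}` for `0 ≤ k ≤ n`. -/
noncomputable def multMat (p : ℝ) (ω : ℕ → ℝ) (h : ℕ → ℂ) : ℕ → ℕ → ℂ := fun n k =>
  if k ≤ n then ((ω n ^ (1 / p) / ω k ^ (1 / p) : ℝ) : ℂ) * h (n - k) else 0

/-- A continuous linear operator on `ℓ^p` is represented by the matrix `A` if its values
on the standard basis vectors have coordinates given by the columns of `A`. -/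
def Represents (p : ℝ) [Fact (1 ≤ ENNReal.ofReal p)]
    (T : Ellp p →L[ℂ] Ellp p) (A : ℕ → ℕ → ℂ) : Prop :=
  ∀ k n : ℕ, (T (lp.single (ENNReal.ofReal p) k 1) : ∀ _ : ℕ, ℂ) n = A n k

section AbstractQN

variable {𝔄 : Type*} [NormedRing 𝔄] [NormedAlgebra ℂ 𝔄] [CompleteSpace 𝔄]

/-- If the powers of `x` are norm-summable, then `1 - x` is a unit. -/
lemma isUnit_one_sub_of_summable {x : 𝔄} (hx : Summable fun n => ‖x ^ n‖) :
    IsUnit (1 - x) := by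
  have hsum : Summable fun n => x ^ n := Summable.of_norm hx
  set y := ∑' n, x ^ n with hy
  have h1 : HasSum (fun n => x ^ n) y := hsum.hasSum
  have h2 : HasSum (fun n => x ^ (n + 1)) (x * y) := by
    have h := h1.mul_left x
    simpa [pow_succ'] using h
  have h2' : HasSum (fun n => x ^ (n + 1)) (y * x) := by
    have h := h1.mul_right x
    simpa [pow_succ] using h
  have h3 : HasSum (fun n => x ^ (n + 1)) (y - 1) := by
    have h4 := (hasSum_nat_add_iff' (f := fun n => x ^ n) 1).mpr h1
    simpa using h4
  have hxy : x * y = y - 1 := h2.unique h3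
  have hyx : y * x = y - 1 := h2'.unique h3
  refine ⟨⟨1 - x, y, ?_, ?_⟩, rfl⟩
  · rw [sub_mul, one_mul, hxy]; abel
  · rw [mul_sub, mul_one, hyx]; abel

variable {m q a : 𝔄}

/-- `m q^{n+1} = q^{n+1} m + (n+1) q^{n+2}` from `[m,q] = q²`. -/
lemma ad_pow (h1 : m * q - q * m = q * q) :
    ∀ n : ℕ, m * q ^ (n + 1) = q ^ (n + 1) * m + ((n : ℂ) + 1) • q ^ (n + 2) := by
  have hmqX : ∀ X : 𝔄, m * (q * X) = q * (m * X) + q * (q * X) := by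
    intro X
    rw [← mul_assoc, ← mul_assoc, ← mul_assoc, ← add_mul]
    congr 1
    rw [← h1]; abel
  intro n
  induction n with
  | zero =>
    have h := hmqX 1
    simpa [pow_succ] using h
  | succ n ih =>
    have expand : q ^ (n + 1 + 1) = q * (q * q ^ n) := by
      rw [pow_succ', pow_succ']
    have expand3 : q ^ (n + 1 + 2) = q * (q * (q * q ^ n)) := by
      rw [pow_succ', pow_succ', pow_succ']
    have ih' : m * (q * q ^ n) = q * q ^ n * m + ((n : ℂ) + 1) • (q * (q * q ^ n)) := by
      have e := ih
      rw [show q ^ (n + 1) = q * q ^ n from pow_succ' q n,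
        show q ^ (n + 2) = q * (q * q ^ n) from by rw [pow_succ', pow_succ']] at e
      exact e
    rw [expand, expand3, hmqX (q * q ^ n), ih']
    push_cast
    simp only [mul_add, mul_smul_comm, smul_add, smul_smul, mul_assoc]
    module

/-- Key identity: `m^{n+1} a = (n+1)·q m^n a + a m^{n+1}`. -/
lemma pow_mul_key (h1 : m * q - q * m = q * q) (ha : m * a - a * m = q * a) :
    ∀ n : ℕ, m ^ (n + 1) * a = ((n : ℂ) + 1) • (q * (m ^ n * a)) + a * m ^ (n + 1) := by
  have hmqX : ∀ X : 𝔄, m * (q * X) = q * (m * X) + q * (q * X) := by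
    intro X
    rw [← mul_assoc, ← mul_assoc, ← mul_assoc, ← add_mul]
    congr 1
    rw [← h1]; abel
  have hmaX : ∀ X : 𝔄, m * (a * X) = a * (m * X) + q * (a * X) := by
    intro X
    rw [← mul_assoc, ← mul_assoc, ← mul_assoc, ← add_mul]
    congr 1
    rw [← ha]; abel
  intro n
  induction n with
  | zero =>
    have : m * a = q * a + a * m := by rw [← ha]; abel
    simpa using this
  | succ n ih =>
    have e1 : m ^ (n + 1 + 1) * a = m * (m ^ (n + 1) * a) := by
      rw [pow_succ', mul_assoc]
    have e2 : m ^ (n + 1) * a = m * (m ^ n * a) := by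
      rw [pow_succ', mul_assoc]
    rw [e1, ih]
    simp only [mul_add, mul_smul_comm]
    rw [hmqX (m ^ n * a), hmaX (m ^ (n + 1)), ← e2, ih, ← pow_succ']
    push_cast
    simp only [mul_add, mul_smul_comm, smul_add, smul_smul]
    module

end AbstractQN

section Main

variable {𝔄 : Type*} [NormedRing 𝔄] [NormedAlgebra ℂ 𝔄] [CompleteSpace 𝔄]
variable {m q a : 𝔄}

/-- Quasinilpotency bound coming from `[m,q] = q²`. -/
lemma qn_norm_bound (h1 : m * q - q * m = q * q) :
    ∀ n : ℕ, ‖q ^ (n + 1)‖ ≤ ‖q‖ * (2 * ‖m‖) ^ n / n.factorial := by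
  intro n
  induction n with
  | zero => simp
  | succ n ih =>
    have had := ad_pow h1 n
    have hsub : ((n : ℂ) + 1) • q ^ (n + 2) = m * q ^ (n + 1) - q ^ (n + 1) * m := by
      rw [had]; abel
    have hnorm : ((n : ℝ) + 1) * ‖q ^ (n + 2)‖ ≤ 2 * ‖m‖ * ‖q ^ (n + 1)‖ := by
      have e1 : ‖((n : ℂ) + 1) • q ^ (n + 2)‖ = ((n : ℝ) + 1) * ‖q ^ (n + 2)‖ := by
        rw [norm_smul]
        congr 1
        have hcast : ((n : ℂ) + 1) = ((n + 1 : ℕ) : ℂ) := by push_cast; ring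
        rw [hcast, Complex.norm_natCast]
        push_cast; ring
      calc ((n : ℝ) + 1) * ‖q ^ (n + 2)‖ = ‖((n : ℂ) + 1) • q ^ (n + 2)‖ := e1.symm
        _ = ‖m * q ^ (n + 1) - q ^ (n + 1) * m‖ := by rw [hsub]
        _ ≤ ‖m * q ^ (n + 1)‖ + ‖q ^ (n + 1) * m‖ := norm_sub_le _ _
        _ ≤ ‖m‖ * ‖q ^ (n + 1)‖ + ‖q ^ (n + 1)‖ * ‖m‖ := by
            gcongr <;> exact norm_mul_le _ _
        _ = 2 * ‖m‖ * ‖q ^ (n + 1)‖ := by ring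
    have hn1 : (0 : ℝ) < (n : ℝ) + 1 := by positivity
    have step : ‖q ^ (n + 2)‖ ≤ 2 * ‖m‖ * ‖q ^ (n + 1)‖ / ((n : ℝ) + 1) := by
      rw [le_div_iff₀ hn1, mul_comm]
      exact hnorm
    calc ‖q ^ (n + 1 + 1)‖ ≤ 2 * ‖m‖ * ‖q ^ (n + 1)‖ / ((n : ℝ) + 1) := step
      _ ≤ 2 * ‖m‖ * (‖q‖ * (2 * ‖m‖) ^ n / n.factorial) / ((n : ℝ) + 1) := by
          gcongr
      _ = ‖q‖ * (2 * ‖m‖) ^ (n + 1) / (n + 1).factorial := by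
          have hf : ((n.factorial : ℝ)) ≠ 0 :=
            Nat.cast_ne_zero.mpr (Nat.factorial_ne_zero _)
          have hg : ((n : ℝ) + 1) ≠ 0 := by positivity
          rw [Nat.factorial_succ]
          push_cast
          field_simp
          ring

/-- Powers of any scalar multiple of `q` are norm-summable. -/
lemma qn_summable (h1 : m * q - q * m = q * q) (t : ℂ) :
    Summable fun n => ‖(t • q) ^ n‖ := by
  rw [← summable_nat_add_iff 1]
  have hb : ∀ n : ℕ, ‖(t • q) ^ (n + 1)‖ ≤
      (‖t‖ * ‖q‖) * ((‖t‖ * (2 * ‖m‖)) ^ n / n.factorial) := by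
    intro n
    have e : (t • q) ^ (n + 1) = t ^ (n + 1) • q ^ (n + 1) := smul_pow _ _ _
    rw [e, norm_smul, norm_pow]
    calc ‖t‖ ^ (n + 1) * ‖q ^ (n + 1)‖
        ≤ ‖t‖ ^ (n + 1) * (‖q‖ * (2 * ‖m‖) ^ n / n.factorial) := by
          gcongr
          exact qn_norm_bound h1 n
      _ = (‖t‖ * ‖q‖) * ((‖t‖ * (2 * ‖m‖)) ^ n / n.factorial) := by
          rw [pow_succ]
          rw [mul_pow]
          ring
  refine Summable.of_nonneg_of_le (fun n => norm_nonneg _) hb ?_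
  exact ((Real.summable_pow_div_factorial (‖t‖ * (2 * ‖m‖))).mul_left _)


open NormedSpace in
/-- Main abstract lemma: if `[m,q] = q²` and `[m,a] = qa`, then any `λ` with
`‖a - q‖ < |λ|` lies in the resolvent set of `a`. -/
theorem isUnit_algebraMap_sub (h1 : m * q - q * m = q * q) (ha : m * a - a * m = q * a)
    {lam : ℂ} (hlam : ‖a - q‖ < ‖lam‖) : IsUnit (algebraMap ℂ 𝔄 lam - a) := by
  have hlam0 : lam ≠ 0 := by
    intro h
    rw [h, norm_zero] at hlam
    exact absurd hlam (not_lt.mpr (norm_nonneg _))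
  set t : ℂ := -lam⁻¹ with ht
  letI : NormedAlgebra ℚ 𝔄 := NormedAlgebra.restrictScalars ℚ ℂ 𝔄
  set W : 𝔄 := exp (t • m) with hW
  set W' : 𝔄 := exp (-(t • m)) with hW'
  have hWW' : W * W' = 1 := by
    rw [hW, hW', ← exp_add_of_commute (Commute.refl (t • m)).neg_right]
    simp
  set c : ℕ → ℂ := fun n => (n.factorial : ℂ)⁻¹ * t ^ n with hc
  have hW2 : HasSum (fun n => c n • m ^ n) W := by
    have h := NormedSpace.exp_series_hasSum_exp' (𝕂 := ℂ) (t • m)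
    have e : ∀ n : ℕ, ((n.factorial : ℂ)⁻¹ : ℂ) • (t • m) ^ n = c n • m ^ n := by
      intro n
      rw [smul_pow, smul_smul, hc]
    rw [hW]
    exact (funext e) ▸ h
  have hWa : HasSum (fun n => c n • (m ^ n * a)) (W * a) := by
    have h := hW2.mul_right a
    simpa [smul_mul_assoc] using h
  have haW : HasSum (fun n => c n • (a * m ^ n)) (a * W) := by
    have h := hW2.mul_left a
    simpa [mul_smul_comm] using h
  have hqWa : HasSum (fun n => c n • (q * (m ^ n * a))) (q * (W * a)) := by
    have h := hWa.mul_left q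
    simpa [mul_smul_comm] using h
  have htqWa : HasSum (fun n => (t * c n) • (q * (m ^ n * a))) (t • (q * (W * a))) := by
    have h := hqWa.const_smul t
    simpa [smul_smul] using h
  have hdiff : HasSum (fun n => c n • (m ^ n * a) - c n • (a * m ^ n)) (W * a - a * W) :=
    hWa.sub haW
  have hterm : ∀ n : ℕ, c (n + 1) • (m ^ (n + 1) * a) - c (n + 1) • (a * m ^ (n + 1)) =
      (t * c n) • (q * (m ^ n * a)) := by
    intro n
    have hk := pow_mul_key h1 ha n
    have e1 : c (n + 1) • (m ^ (n + 1) * a) - c (n + 1) • (a * m ^ (n + 1)) =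
        c (n + 1) • (((n : ℂ) + 1) • (q * (m ^ n * a))) := by
      rw [hk, smul_add]
      abel
    rw [e1, smul_smul]
    congr 1
    simp only [hc]
    have hfact' : ((n.factorial : ℂ)) ≠ 0 :=
      Nat.cast_ne_zero.mpr (Nat.factorial_ne_zero _)
    have hn1 : ((n : ℂ) + 1) ≠ 0 := by
      have hcast : ((n : ℂ) + 1) = ((n + 1 : ℕ) : ℂ) := by push_cast; ring
      rw [hcast]
      exact Nat.cast_ne_zero.mpr (Nat.succ_ne_zero n)
    rw [Nat.factorial_succ]
    push_cast
    field_simp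
    ring
  have hshift : HasSum
      (fun n => c (n + 1) • (m ^ (n + 1) * a) - c (n + 1) • (a * m ^ (n + 1)))
      (t • (q * (W * a))) := by
    have e : (fun n => c (n + 1) • (m ^ (n + 1) * a) - c (n + 1) • (a * m ^ (n + 1)))
        = fun n => (t * c n) • (q * (m ^ n * a)) := funext hterm
    rw [e]
    exact htqWa
  have hfull : HasSum (fun n => c n • (m ^ n * a) - c n • (a * m ^ n))
      (t • (q * (W * a))) := by
    have h := (hasSum_nat_add_iff
      (f := fun n => c n • (m ^ n * a) - c n • (a * m ^ n)) 1).mp hshift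
    simpa [hc] using h
  have hkey : W * a - a * W = t • (q * (W * a)) := hdiff.unique hfull
  set v : 𝔄 := 1 - t • q with hv
  have hva : v * (W * a) = a * W := by
    rw [hv, sub_mul, one_mul, smul_mul_assoc, ← hkey]
    abel
  have hvUnit : IsUnit v := by
    rw [hv]; exact isUnit_one_sub_of_summable (qn_summable h1 t)
  set e : 𝔄 := a - q with he
  have heUnit : IsUnit (algebraMap ℂ 𝔄 lam - e) := by
    have hr : ‖lam⁻¹ • e‖ < 1 := by
      rw [norm_smul, norm_inv]
      rw [inv_mul_lt_iff₀ (lt_of_le_of_lt (norm_nonneg _) hlam)]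
      simpa [he] using hlam
    have hx : Summable fun n => ‖(lam⁻¹ • e) ^ n‖ := by
      rw [← summable_nat_add_iff 1]
      refine Summable.of_nonneg_of_le (fun n => norm_nonneg _)
        (fun n => ?_) (((summable_geometric_of_lt_one
          (norm_nonneg (lam⁻¹ • e)) hr)).mul_left ‖lam⁻¹ • e‖)
      calc ‖(lam⁻¹ • e) ^ (n + 1)‖ ≤ ‖lam⁻¹ • e‖ ^ (n + 1) :=
            norm_pow_le' _ (Nat.succ_pos n)
        _ = ‖lam⁻¹ • e‖ * ‖lam⁻¹ • e‖ ^ n := by rw [pow_succ]; ring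
    have hfac : algebraMap ℂ 𝔄 lam - e = (algebraMap ℂ 𝔄 lam) * (1 - lam⁻¹ • e) := by
      rw [mul_sub, mul_one]
      congr 1
      rw [Algebra.algebraMap_eq_smul_one, smul_mul_assoc, one_mul, smul_smul,
        mul_inv_cancel₀ hlam0, one_smul]
    rw [hfac]
    exact ((isUnit_iff_ne_zero.mpr hlam0).map (algebraMap ℂ 𝔄)).mul
      (isUnit_one_sub_of_summable hx)
  have hLW : W * algebraMap ℂ 𝔄 lam = lam • W := by
    rw [Algebra.algebraMap_eq_smul_one, mul_smul_comm, mul_one]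
  have hfinal : (v * W) * (algebraMap ℂ 𝔄 lam - a) * W' = algebraMap ℂ 𝔄 lam - e := by
    calc (v * W) * (algebraMap ℂ 𝔄 lam - a) * W'
        = (v * (W * algebraMap ℂ 𝔄 lam) - v * (W * a)) * W' := by
          rw [mul_sub (v * W), mul_assoc v W, mul_assoc v W]
      _ = (lam • (v * W) - a * W) * W' := by rw [hLW, hva, mul_smul_comm]
      _ = lam • (v * (W * W')) - a * (W * W') := by
          rw [sub_mul, smul_mul_assoc, mul_assoc, mul_assoc]
      _ = lam • v - a := by rw [hWW', mul_one, mul_one]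
      _ = algebraMap ℂ 𝔄 lam - e := by
          rw [hv, he, smul_sub, smul_smul, Algebra.algebraMap_eq_smul_one, ht]
          have hlt : lam * -lam⁻¹ = -1 := by
            field_simp
          rw [hlt, neg_one_smul]
          abel
  have hWu : IsUnit W := by rw [hW]; exact isUnit_exp _
  have hW'u : IsUnit W' := by rw [hW']; exact isUnit_exp _
  obtain ⟨u1, hu1e⟩ := hvUnit.mul hWu
  obtain ⟨u2, hu2e⟩ := hW'u
  rw [← hu1e, ← hu2e] at hfinal
  have hX : algebraMap ℂ 𝔄 lam - a
      = ↑u1⁻¹ * (algebraMap ℂ 𝔄 lam - e) * ↑u2⁻¹ := by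
    rw [← hfinal, mul_assoc (u1 : 𝔄) (algebraMap ℂ 𝔄 lam - a) (u2 : 𝔄),
      Units.inv_mul_cancel_left, Units.mul_inv_cancel_right]
  rw [hX]
  exact ((u1⁻¹.isUnit.mul heUnit).mul u2⁻¹.isUnit)

end Main

section Plumbing

variable (p : ℝ) [Fact (1 ≤ ENNReal.ofReal p)]

lemma Pne_top : (ENNReal.ofReal p) ≠ ⊤ := ENNReal.ofReal_ne_top

lemma Pne_zero : (ENNReal.ofReal p) ≠ 0 :=
  (lt_of_lt_of_le zero_lt_one (Fact.out : 1 ≤ ENNReal.ofReal p)).ne'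

/-- Coordinate evaluation as a continuous linear map. -/
noncomputable def coordL (n : ℕ) : Ellp p →L[ℂ] ℂ :=
  LinearMap.mkContinuous
    { toFun := fun x => (x : ∀ _ : ℕ, ℂ) n
      map_add' := fun x y => by simp only [lp.coeFn_add, Pi.add_apply]
      map_smul' := fun c x => by
        simp only [lp.coeFn_smul, Pi.smul_apply, RingHom.id_apply] }
    1 (fun x => by
      show ‖(x : ∀ _ : ℕ, ℂ) n‖ ≤ 1 * ‖x‖
      simpa using lp.norm_apply_le_norm (Pne_zero p) x n)

@[simp] lemma coordL_apply (n : ℕ) (x : Ellp p) : coordL p n x = (x : ∀ _ : ℕ, ℂ) n := rfl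

/-- The coordinates of `T x` as an unconditionally convergent series. -/
lemma hasSum_apply (T : Ellp p →L[ℂ] Ellp p) (x : Ellp p) (n : ℕ) :
    HasSum (fun k => (x : ∀ _ : ℕ, ℂ) k *
        (T (lp.single (ENNReal.ofReal p) k 1) : ∀ _ : ℕ, ℂ) n)
      ((T x : ∀ _ : ℕ, ℂ) n) := by
  have h0 : HasSum (fun k => lp.single (ENNReal.ofReal p) k ((x : ∀ _ : ℕ, ℂ) k)) x :=
    lp.hasSum_single (Pne_top p) x
  have h1 : HasSum (fun k => T (lp.single (ENNReal.ofReal p) k ((x : ∀ _ : ℕ, ℂ) k))) (T x) :=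
    T.hasSum h0
  have h2 : (fun k => T (lp.single (ENNReal.ofReal p) k ((x : ∀ _ : ℕ, ℂ) k)))
      = fun k => (x : ∀ _ : ℕ, ℂ) k • T (lp.single (ENNReal.ofReal p) k 1) := by
    funext k
    have e : (lp.single (ENNReal.ofReal p) k ((x : ∀ _ : ℕ, ℂ) k) : Ellp p)
        = (x : ∀ _ : ℕ, ℂ) k • (lp.single (ENNReal.ofReal p) k (1 : ℂ) : Ellp p) := by
      rw [← lp.single_smul (E := fun _ : ℕ => ℂ) (ENNReal.ofReal p) k ((x : ∀ _ : ℕ, ℂ) k)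
          (1 : ℂ), smul_eq_mul, mul_one]
    rw [e, map_smul]
  rw [h2] at h1
  have h3 := (coordL p n).hasSum h1
  simpa [smul_eq_mul] using h3

/-- Two operators represented by the same matrix coincide. -/
lemma represents_unique {T₁ T₂ : Ellp p →L[ℂ] Ellp p} {B : ℕ → ℕ → ℂ}
    (h₁ : Represents p T₁ B) (h₂ : Represents p T₂ B) : T₁ = T₂ := by
  refine ContinuousLinearMap.ext fun x => ?_
  refine lp.ext (funext fun n => ?_)
  have s₁ := hasSum_apply p T₁ x n
  have s₂ := hasSum_apply p T₂ x n
  have e : (fun k => (x : ∀ _ : ℕ, ℂ) k *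
      (T₁ (lp.single (ENNReal.ofReal p) k 1) : ∀ _ : ℕ, ℂ) n)
      = fun k => (x : ∀ _ : ℕ, ℂ) k *
      (T₂ (lp.single (ENNReal.ofReal p) k 1) : ∀ _ : ℕ, ℂ) n := by
    funext k
    rw [h₁ k n, h₂ k n]
  rw [e] at s₁
  exact s₁.unique s₂

/-- Representation of a difference. -/
lemma represents_sub {T₁ T₂ : Ellp p →L[ℂ] Ellp p} {B₁ B₂ : ℕ → ℕ → ℂ}
    (h₁ : Represents p T₁ B₁) (h₂ : Represents p T₂ B₂) :
    Represents p (T₁ - T₂) (fun n k => B₁ n k - B₂ n k) := by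
  intro k n
  have : ((T₁ - T₂) (lp.single (ENNReal.ofReal p) k 1) : ∀ _ : ℕ, ℂ) n
      = (T₁ (lp.single (ENNReal.ofReal p) k 1) : ∀ _ : ℕ, ℂ) n
        - (T₂ (lp.single (ENNReal.ofReal p) k 1) : ∀ _ : ℕ, ℂ) n := by
    rw [ContinuousLinearMap.sub_apply, lp.coeFn_sub]
    rfl
  rw [this, h₁ k n, h₂ k n]

/-- Representation of a composition of lower-triangular operators. -/
lemma represents_mul {S T : Ellp p →L[ℂ] Ellp p} {σM τM : ℕ → ℕ → ℂ}
    (hS : Represents p S σM) (hT : Represents p T τM)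
    (hσ : ∀ n j, n < j → σM n j = 0) (hτ : ∀ j k, j < k → τM j k = 0) :
    Represents p (S * T) (fun n k => ∑ j ∈ Finset.Icc k n, σM n j * τM j k) := by
  intro k n
  have hx := hasSum_apply p S (T (lp.single (ENNReal.ofReal p) k 1)) n
  have e : (fun j => (T (lp.single (ENNReal.ofReal p) k 1) : ∀ _ : ℕ, ℂ) j *
      (S (lp.single (ENNReal.ofReal p) j 1) : ∀ _ : ℕ, ℂ) n)
      = fun j => τM j k * σM n j := by
    funext j
    rw [hT k j, hS j n]
  rw [e] at hx
  have hfin : HasSum (fun j => τM j k * σM n j)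
      (∑ j ∈ Finset.Icc k n, τM j k * σM n j) := by
    apply hasSum_sum_of_ne_finset_zero
    intro j hj
    rw [Finset.mem_Icc] at hj
    push_neg at hj
    by_cases hk : k ≤ j
    · rw [hσ n j (hj hk), mul_zero]
    · rw [hτ j k (lt_of_not_ge hk), zero_mul]
  have hval : ((S * T) (lp.single (ENNReal.ofReal p) k 1) : ∀ _ : ℕ, ℂ) n
      = (S (T (lp.single (ENNReal.ofReal p) k 1)) : ∀ _ : ℕ, ℂ) n := rfl
  rw [hval, hx.unique hfin]
  exact Finset.sum_congr rfl fun j _ => mul_comm _ _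

end Plumbing

section Matrices

variable (p : ℝ) (ω : ℕ → ℝ)

lemma volMat_of_lt (f : ℕ → ℂ) {n k : ℕ} (h : k < n) :
    volMat p ω f n k =
      (((((n : ℝ) - (k : ℝ)) / (n : ℝ)) * (ω n ^ (1 / p) / ω k ^ (1 / p)) : ℝ) : ℂ) *
        f (n - k) := if_pos h

lemma volMat_of_ge (f : ℕ → ℂ) {n k : ℕ} (h : ¬ k < n) : volMat p ω f n k = 0 := if_neg h

lemma multMat_of_le (h : ℕ → ℂ) {n k : ℕ} (hk : k ≤ n) :
    multMat p ω h n k = ((ω n ^ (1 / p) / ω k ^ (1 / p) : ℝ) : ℂ) * h (n - k) := if_pos hk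

lemma volMat_tri (f : ℕ → ℂ) : ∀ n j, n < j → volMat p ω f n j = 0 := by
  intro n j hnj; exact volMat_of_ge p ω f (by omega)

lemma volMat_tri' (f : ℕ → ℂ) : ∀ j k, j < k → volMat p ω f j k = 0 := by
  intro j k hjk; exact volMat_of_ge p ω f (by omega)

lemma multMat_tri (h : ℕ → ℂ) : ∀ n j, n < j → multMat p ω h n j = 0 := by
  intro n j hnj; rw [multMat, if_neg (by omega)]

lemma volMat_sub (g h : ℕ → ℂ) (n k : ℕ) :
    volMat p ω g n k - volMat p ω (fun i => g i - h i) n k = volMat p ω h n k := by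
  by_cases hkn : k < n
  · rw [volMat_of_lt p ω _ hkn, volMat_of_lt p ω _ hkn, volMat_of_lt p ω _ hkn]
    ring
  · rw [volMat_of_ge p ω _ hkn, volMat_of_ge p ω _ hkn, volMat_of_ge p ω _ hkn]
    ring

/-- The key finite combinatorial identity
`multMat(h)·volMat(f) - volMat(f)·multMat(h) = volMat(h)·volMat(f)`, entrywise. -/
lemma key_matrix (hω : ∀ i, 0 < ω i) (f h : ℕ → ℂ) (n k : ℕ) :
    (∑ j ∈ Finset.Icc k n, multMat p ω h n j * volMat p ω f j k)
      - ∑ j ∈ Finset.Icc k n, volMat p ω f n j * multMat p ω h j k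
    = ∑ j ∈ Finset.Icc k n, volMat p ω h n j * volMat p ω f j k := by
  have hA : ∀ i : ℕ, (0 : ℝ) < ω i ^ (1 / p) := fun i => Real.rpow_pos_of_pos (hω i) _
  have hinv : ∑ j ∈ Finset.Icc k n, volMat p ω f n j * multMat p ω h j k
      = ∑ j ∈ Finset.Icc k n, volMat p ω f n (n + k - j) * multMat p ω h (n + k - j) k := by
    refine Finset.sum_nbij' (i := fun j => n + k - j) (j := fun j => n + k - j)
      ?_ ?_ ?_ ?_ ?_
    · intro a ha; simp only [Finset.mem_Icc] at ha ⊢; omega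
    · intro a ha; simp only [Finset.mem_Icc] at ha ⊢; omega
    · intro a ha; simp only [Finset.mem_Icc] at ha; omega
    · intro a ha; simp only [Finset.mem_Icc] at ha; omega
    · intro a ha; simp only [Finset.mem_Icc] at ha
      congr 2 <;> omega
  rw [hinv, ← Finset.sum_sub_distrib]
  refine Finset.sum_congr rfl fun j hj => ?_
  rw [Finset.mem_Icc] at hj
  obtain ⟨hkj, hjn⟩ := hj
  by_cases hkj' : k < j
  · by_cases hjn' : j < n
    · -- main case `k < j < n`
      have h1 : n + k - j < n := by omega
      have h2 : k ≤ n + k - j := by omega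
      have e1 : n - (n + k - j) = j - k := by omega
      have e2 : n + k - j - k = n - j := by omega
      rw [multMat_of_le p ω h hjn, volMat_of_lt p ω f hkj', volMat_of_lt p ω f h1,
        multMat_of_le p ω h h2, volMat_of_lt p ω h hjn', e1, e2]
      have hjnk : j ≤ n + k := by omega
      have hAn : ((ω n ^ (1 / p) : ℝ) : ℂ) ≠ 0 := by
        exact_mod_cast (hA n).ne'
      have hAk : ((ω k ^ (1 / p) : ℝ) : ℂ) ≠ 0 := by
        exact_mod_cast (hA k).ne'
      have hAj : ((ω j ^ (1 / p) : ℝ) : ℂ) ≠ 0 := by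
        exact_mod_cast (hA j).ne'
      have hAj' : ((ω (n + k - j) ^ (1 / p) : ℝ) : ℂ) ≠ 0 := by
        exact_mod_cast (hA (n + k - j)).ne'
      have hn0 : ((n : ℕ) : ℂ) ≠ 0 := by
        have : n ≠ 0 := by omega
        exact_mod_cast this
      have hj0 : ((j : ℕ) : ℂ) ≠ 0 := by
        have : j ≠ 0 := by omega
        exact_mod_cast this
      push_cast [Nat.cast_sub hjnk]
      field_simp
      ring
    · -- `j = n`
      have hjn'' : j = n := by omega
      subst hjn''
      have e0 : j + k - j = k := by omega
      rw [e0, volMat_of_ge p ω h (lt_irrefl j),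
        multMat_of_le p ω h (le_refl j), multMat_of_le p ω h (le_refl k)]
      simp only [Nat.sub_self, div_self (hA j).ne', div_self (hA k).ne',
        Complex.ofReal_one]
      ring
  · -- `j = k`
    have hjk'' : j = k := by omega
    subst hjk''
    have e0 : n + j - j = n := by omega
    rw [e0, volMat_of_ge p ω f (lt_irrefl j), volMat_of_ge p ω f (lt_irrefl n)]
    ring

end Matrices

/-- If `g` lies in the closure of the multiplier algebra `Mult(ℓ^p_A(ω))` inside the
space of symbols inducing bounded generalized Volterra operators (with the operator norm
`‖T_h‖`), then `T_g` is quasi-nilpotent on `ℓ^p_A(ω)`: its spectrum is `{0}`. -/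
theorem volterra_quasinilpotent (p : ℝ) (hp : 1 < p) [Fact (1 ≤ ENNReal.ofReal p)]
    (ω : ℕ → ℝ) (hω : ∀ n, 0 < ω n)
    (hratio : Filter.Tendsto (fun n => ω n / ω (n + 1)) Filter.atTop (nhds 1))
    (g : ℕ → ℂ) (Tg : Ellp p →L[ℂ] Ellp p)
    (hTg : Represents p Tg (volMat p ω g))
    (hclosure : ∀ ε : ℝ, 0 < ε → ∃ h : ℕ → ℂ, ∃ Mh Tgh : Ellp p →L[ℂ] Ellp p,
      Represents p Mh (multMat p ω h) ∧
      Represents p Tgh (volMat p ω (fun n => g n - h n)) ∧ ‖Tgh‖ < ε) :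
    spectrum ℂ Tg = {0} := by
  classical
  have hne : (lp.single (ENNReal.ofReal p) 0 (1 : ℂ) : Ellp p) ≠ 0 := by
    intro hzero
    have h0 : ((lp.single (ENNReal.ofReal p) 0 (1 : ℂ) : Ellp p) : ∀ _ : ℕ, ℂ) 0
        = ((0 : Ellp p) : ∀ _ : ℕ, ℂ) 0 := by rw [hzero]
    rw [lp.single_apply_self] at h0
    simp at h0
  haveI : Nontrivial (Ellp p) := ⟨_, _, hne⟩
  haveI : Nontrivial (Ellp p →L[ℂ] Ellp p) := by
    refine ⟨1, 0, fun h10 => hne ?_⟩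
    calc (lp.single (ENNReal.ofReal p) 0 (1 : ℂ) : Ellp p)
        = (1 : Ellp p →L[ℂ] Ellp p) (lp.single (ENNReal.ofReal p) 0 (1 : ℂ)) := rfl
      _ = (0 : Ellp p →L[ℂ] Ellp p) (lp.single (ENNReal.ofReal p) 0 (1 : ℂ)) := by rw [h10]
      _ = 0 := rfl
  have hsub : spectrum ℂ Tg ⊆ {0} := by
    intro lam hlam
    by_contra hlam0
    simp only [Set.mem_singleton_iff] at hlam0
    have hpos : 0 < ‖lam‖ := norm_pos_iff.mpr hlam0
    obtain ⟨h, Mh, Tgh, hMh, hTgh, hsmall⟩ := hclosure ‖lam‖ hpos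
    set Q : Ellp p →L[ℂ] Ellp p := Tg - Tgh with hQdef
    have hQ : Represents p Q (volMat p ω h) := by
      have h0 := represents_sub p hTg hTgh
      have e : (fun n k => volMat p ω g n k - volMat p ω (fun i => g i - h i) n k)
          = volMat p ω h := by
        funext n k
        exact volMat_sub p ω g h n k
      rw [e] at h0
      exact h0
    have hrel1 : Mh * Q - Q * Mh = Q * Q := by
      have hL := represents_sub p
        (represents_mul p hMh hQ (multMat_tri p ω h) (volMat_tri' p ω h))
        (represents_mul p hQ hMh (volMat_tri p ω h) (multMat_tri p ω h))
      have hR := represents_mul p hQ hQ (volMat_tri p ω h) (volMat_tri' p ω h)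
      refine represents_unique p ?_ hR
      have e : (fun n k => (∑ j ∈ Finset.Icc k n, multMat p ω h n j * volMat p ω h j k)
            - ∑ j ∈ Finset.Icc k n, volMat p ω h n j * multMat p ω h j k)
          = fun n k => ∑ j ∈ Finset.Icc k n, volMat p ω h n j * volMat p ω h j k := by
        funext n k
        exact key_matrix p ω hω h h n k
      rw [e] at hL
      exact hL
    have hrel2 : Mh * Tg - Tg * Mh = Q * Tg := by
      have hL := represents_sub p
        (represents_mul p hMh hTg (multMat_tri p ω h) (volMat_tri' p ω g))
        (represents_mul p hTg hMh (volMat_tri p ω g) (multMat_tri p ω h))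
      have hR := represents_mul p hQ hTg (volMat_tri p ω h) (volMat_tri' p ω g)
      refine represents_unique p ?_ hR
      have e : (fun n k => (∑ j ∈ Finset.Icc k n, multMat p ω h n j * volMat p ω g j k)
            - ∑ j ∈ Finset.Icc k n, volMat p ω g n j * multMat p ω h j k)
          = fun n k => ∑ j ∈ Finset.Icc k n, volMat p ω h n j * volMat p ω g j k := by
        funext n k
        exact key_matrix p ω hω g h n k
      rw [e] at hL
      exact hL
    have hnorm : ‖Tg - Q‖ < ‖lam‖ := by
      rw [hQdef, sub_sub_cancel]
      exact hsmall
    have hunit := isUnit_algebraMap_sub hrel1 hrel2 hnorm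
    rw [spectrum.mem_iff] at hlam
    exact hlam hunit
  obtain ⟨z, hz⟩ := spectrum.nonempty Tg
  have hz0 : z = 0 := hsub hz
  refine Set.eq_singleton_iff_unique_mem.mpr ⟨hz0 ▸ hz, fun x hx => hsub hx⟩
end

section
/- The spectral radius of the Fejér matrix 𝓕 = (1 − k/(n+1))_{0≤k≤n} in the Banach algebra 𝒮_2^L of Schur multipliers for lower triangular operators on ℓ² is at most 1; consequently, for every λ ∈ ℂ with Re λ > 0, the element (λ+1)𝟙_L − 𝓕 is invertible in 𝒮_2^L, with inverse the matrix ((n+1)/(k + λ(n+1)))_{0≤k≤n}. -/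
open scoped BigOperators

/-- `MatBound p A C` : the matrix `A` (row index first), acting on finitely supported
sequences, is bounded on `ℓ^p` with norm at most `C`. -/
noncomputable def MatBound (p : ℝ) (A : ℕ → ℕ → ℂ) (C : ℝ) : Prop :=
  ∀ x : ℕ →₀ ℂ,
    Summable (fun n : ℕ => ‖∑ k ∈ x.support, A n k * x k‖ ^ p) ∧
    ∑' n : ℕ, ‖∑ k ∈ x.support, A n k * x k‖ ^ p ≤
      C ^ p * ∑ k ∈ x.support, ‖x k‖ ^ p

/-- The matrix `A` represents a bounded operator on `ℓ^p`. -/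
noncomputable def IsBoundedOn (p : ℝ) (A : ℕ → ℕ → ℂ) : Prop :=
  ∃ C : ℝ, 0 ≤ C ∧ MatBound p A C

/-- `S` is a Schur multiplier on `ℓ^p`. -/
noncomputable def IsSchurMult (p : ℝ) (S : ℕ → ℕ → ℂ) : Prop :=
  ∀ A : ℕ → ℕ → ℂ, IsBoundedOn p A → IsBoundedOn p (fun n k => S n k * A n k)

/-- A matrix is lower triangular if its entries vanish above the main diagonal. -/
def LowerTri (A : ℕ → ℕ → ℂ) : Prop := ∀ n k : ℕ, n < k → A n k = 0

/-- `S` is a Schur multiplier for lower triangular matrices on `ℓ^p`. -/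
noncomputable def IsSchurMultLT (p : ℝ) (S : ℕ → ℕ → ℂ) : Prop :=
  ∀ A : ℕ → ℕ → ℂ, LowerTri A → IsBoundedOn p A →
    IsBoundedOn p (fun n k => S n k * A n k)

/-- Schur multiplier norm for lower triangular operators on `ℓ²`: the least constant `C`
such that `‖S ⊙ A‖ ≤ C‖A‖` for all bounded lower triangular `A`. -/
noncomputable def schurNormLT (S : ℕ → ℕ → ℂ) : ℝ :=
  sInf {C : ℝ | 0 ≤ C ∧ ∀ (A : ℕ → ℕ → ℂ) (M : ℝ), 0 ≤ M → LowerTri A →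
    MatBound 2 A M → MatBound 2 (fun n k => S n k * A n k) (C * M)}

/-- `N`-th Hadamard power of the Fejér matrix. -/
noncomputable def fejerPow (N : ℕ) : ℕ → ℕ → ℂ := fun n k =>
  if k ≤ n then (((1 - (k : ℝ) / ((n : ℝ) + 1) : ℝ) : ℂ)) ^ N else 0


open scoped ENNReal NNReal
open Finset

private abbrev lg (j : ℕ) : ℕ := Nat.log 2 j

private lemma rpow_two_eq (r : ℝ) : r ^ (2:ℝ) = r ^ 2 := by
  rw [show (2:ℝ) = ((2:ℕ):ℝ) by norm_num, Real.rpow_natCast]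

private lemma pow_lip (N : ℕ) : ∀ a b : ℝ, 0 ≤ a → a ≤ 1 → 0 ≤ b → b ≤ 1 →
    |a ^ N - b ^ N| ≤ N * |a - b| := by
  induction N with
  | zero => intro a b _ _ _ _; simp
  | succ N ih =>
    intro a b ha0 ha1 hb0 hb1
    have h1 : a^(N+1) - b^(N+1) = a * (a^N - b^N) + (a - b) * b^N := by ring
    have habs : |a| ≤ 1 := abs_le.mpr ⟨by linarith, ha1⟩
    have hbabs : |b^N| ≤ 1 := by
      rw [abs_pow]; exact pow_le_one₀ (abs_nonneg b) (abs_le.mpr ⟨by linarith, hb1⟩)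
    calc |a^(N+1) - b^(N+1)| ≤ |a * (a^N - b^N)| + |(a - b) * b^N| := by
          rw [h1]; exact abs_add_le _ _
      _ = |a| * |a^N - b^N| + |a - b| * |b^N| := by rw [abs_mul, abs_mul]
      _ ≤ 1 * (N * |a - b|) + |a - b| * 1 := by
          gcongr
          · exact ih a b ha0 ha1 hb0 hb1
      _ = (N+1 : ℕ) * |a - b| := by push_cast; ring

private lemma telescope (g : ℕ → ℂ) (m : ℕ) : ∀ k, m ≤ k →
    ∑ j ∈ Ioc m k, (g j - g (j-1)) = g k - g m := by
  intro k
  induction k with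
  | zero => intro hm; interval_cases m; simp
  | succ k ih =>
    intro hm
    rcases Nat.lt_or_ge m (k+1) with hlt | hge
    · have hmk : m ≤ k := by omega
      rw [Finset.sum_Ioc_succ_top hmk, ih hmk]
      simp only [Nat.add_sub_cancel]
      ring
    · have : m = k + 1 := by omega
      subst this
      simp

private lemma filter_cond_iff (j k : ℕ) (hj : j ≠ 0) :
    (j ≤ k ∧ k < 2^(lg j + 1)) ↔ (2^(lg k) ≤ j ∧ j ≤ k) := by
  constructor
  · rintro ⟨hjk, hklt⟩
    have hk0 : k ≠ 0 := by omega
    have h1 : lg j ≤ lg k := Nat.log_mono_right hjk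
    have h2 : lg k < lg j + 1 := Nat.log_lt_of_lt_pow hk0 hklt
    have h3 : lg j = lg k := by omega
    exact ⟨h3 ▸ Nat.pow_log_le_self 2 hj, hjk⟩
  · rintro ⟨h2k, hjk⟩
    have h1 : lg k ≤ lg j := by
      have := Nat.log_mono_right (b := 2) h2k
      rwa [Nat.log_pow (by norm_num)] at this
    refine ⟨hjk, ?_⟩
    calc k < 2^(lg k + 1) := Nat.lt_pow_succ_log_self (by norm_num) k
      _ ≤ 2^(lg j + 1) := Nat.pow_le_pow_right (by norm_num) (by omega)

private lemma not_base_of_mem_Ioc {j k : ℕ} (hj : j ∈ Finset.Ioc (2^(lg k)) k) :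
    ¬ (j = 2^(lg j)) := by
  simp only [Finset.mem_Ioc] at hj
  intro hbase
  have h1 : lg j ≤ lg k := Nat.log_mono_right hj.2
  have h2 : j ≤ 2^(lg k) := by
    calc j = 2^(lg j) := hbase
      _ ≤ 2^(lg k) := Nat.pow_le_pow_right (by norm_num) h1
  omega

private lemma lg_eq_of_mem_Icc {j k : ℕ} (hj : j ∈ Finset.Icc (2^(lg k)) k) : lg j = lg k := by
  simp only [Finset.mem_Icc] at hj
  have h1 : lg j ≤ lg k := Nat.log_mono_right hj.2
  have h2 : lg k ≤ lg j := by
    have := Nat.log_mono_right (b := 2) hj.1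
    rwa [Nat.log_pow (by norm_num)] at this
  omega
-- pieces
private noncomputable def pbeta (j : ℕ) : ℝ := if j = 2^(lg j) then (j:ℝ) else 1

private noncomputable def pa (h : ℝ → ℂ) (p : ℕ × ℕ) (n : ℕ) : ℂ :=
  if p.2 = 0 then (if p.1 = 0 then h 0 else 0)
  else if p.1 = lg (n+1) ∧ p.2 ≤ n then
    h ((p.2:ℝ)/((n:ℝ)+1)) -
      (if p.2 = 2^(lg p.2) then h 0 else h (((p.2-1 : ℕ):ℝ)/((n:ℝ)+1)))
  else 0

private noncomputable def pb (p : ℕ × ℕ) (k : ℕ) : ℂ :=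
  if p.2 = 0 then 1 else if p.2 ≤ k ∧ k < 2^(lg p.2 + 1) then 1 else 0

private noncomputable def pgam (p : ℕ × ℕ) : ℝ := (3/4 : ℝ)^(p.1 - lg p.2)

private noncomputable def pc (h0n L : ℝ) (p : ℕ × ℕ) : ℝ :=
  if p.2 = 0 then (if p.1 = 0 then h0n else 0)
  else if lg p.2 ≤ p.1 then L * pbeta p.2 * (1/2 : ℝ)^p.1 else 0

private noncomputable def pF (n : ℕ) : Finset (ℕ×ℕ) :=
  insert (0,0) (({lg (n+1)} : Finset ℕ) ×ˢ Finset.Icc 1 n)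

private lemma pF_notmem (n : ℕ) : ((0,0) : ℕ×ℕ) ∉ (({lg (n+1)} : Finset ℕ) ×ˢ Finset.Icc 1 n) := by
  simp

private lemma pb_val (p : ℕ × ℕ) (k : ℕ) : pb p k = 0 ∨ pb p k = 1 := by
  unfold pb
  split
  · right; rfl
  · split
    · right; rfl
    · left; rfl

private lemma pa_zero_off (h : ℝ → ℂ) (n : ℕ) (p : ℕ × ℕ) (hp : p ∉ pF n) : pa h p n = 0 := by
  obtain ⟨i, j⟩ := p
  unfold pa pF at *
  by_cases hj : j = 0
  · subst hj
    by_cases hi : i = 0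
    · exact absurd (by subst hi; exact Finset.mem_insert_self _ _) hp
    · simp [hi]
  · simp only [hj, if_false]
    by_cases hcond : i = lg (n+1) ∧ j ≤ n
    · exfalso
      apply hp
      apply Finset.mem_insert_of_mem
      rw [Finset.mem_product]
      refine ⟨Finset.mem_singleton.mpr hcond.1, Finset.mem_Icc.mpr ⟨by omega, hcond.2⟩⟩
    · simp [hcond]

-- key identity
private lemma sum_ab (h : ℝ → ℂ) (n k : ℕ) (hkn : k ≤ n) :
    ∑ p ∈ pF n, pa h p n * pb p k = h ((k:ℝ)/((n:ℝ)+1)) := by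
  classical
  rw [pF, Finset.sum_insert (pF_notmem n)]
  have h00 : pa h (0,0) n * pb (0,0) k = h 0 := by simp [pa, pb]
  rw [h00, Finset.sum_product, Finset.sum_singleton]
  have hterm : ∀ j ∈ Finset.Icc 1 n, pa h (lg (n+1), j) n * pb (lg (n+1), j) k
      = if j ≤ k ∧ k < 2^(lg j + 1) then
          (h ((j:ℝ)/((n:ℝ)+1)) -
            (if j = 2^(lg j) then h 0 else h (((j-1 : ℕ):ℝ)/((n:ℝ)+1)))) else 0 := by
    intro j hj
    rw [Finset.mem_Icc] at hj
    have hj0 : j ≠ 0 := by omega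
    unfold pa pb
    rw [if_neg hj0, if_neg hj0, if_pos (show lg (n+1) = lg (n+1) ∧ j ≤ n from ⟨rfl, hj.2⟩)]
    by_cases hb : j ≤ k ∧ k < 2^(lg j + 1)
    · rw [if_pos hb, if_pos hb, mul_one]
    · rw [if_neg hb, if_neg hb, mul_zero]
  rw [Finset.sum_congr rfl hterm, ← Finset.sum_filter]
  have hfil : (Finset.Icc 1 n).filter (fun j => j ≤ k ∧ k < 2^(lg j + 1))
      = Finset.Icc (2^(lg k)) k := by
    ext j
    simp only [Finset.mem_filter, Finset.mem_Icc]
    constructor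
    · rintro ⟨⟨hj1, hjn⟩, hcond⟩
      exact (filter_cond_iff j k (by omega)).mp hcond
    · rintro ⟨h2k, hjk⟩
      have hj1 : 1 ≤ j := le_trans Nat.one_le_two_pow h2k
      exact ⟨⟨hj1, le_trans hjk hkn⟩, (filter_cond_iff j k (by omega)).mpr ⟨h2k, hjk⟩⟩
  rw [hfil]
  by_cases hk0 : k = 0
  · subst hk0
    have : (2:ℕ)^(lg 0) = 1 := by simp [lg]
    rw [this]
    simp
  · have hmk : 2^(lg k) ≤ k := Nat.pow_log_le_self 2 hk0
    rw [Finset.Icc_eq_cons_Ioc hmk, Finset.sum_cons]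
    have hbasem : (2:ℕ)^(lg k) = 2^(lg (2^(lg k))) := by
      have hlg : lg (2^(lg k)) = lg k := Nat.log_pow (by norm_num) _
      rw [hlg]
    have hfirst : (if (2:ℕ)^(lg k) = 2^(lg (2^(lg k))) then h 0
        else h ((((2^(lg k):ℕ) - 1 : ℕ):ℝ)/((n:ℝ)+1))) = h 0 := if_pos hbasem
    rw [hfirst]
    have hrest : ∑ j ∈ Finset.Ioc (2^(lg k)) k,
        (h ((j:ℝ)/((n:ℝ)+1)) -
          (if j = 2^(lg j) then h 0 else h (((j-1 : ℕ):ℝ)/((n:ℝ)+1))))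
        = ∑ j ∈ Finset.Ioc (2^(lg k)) k,
          ((fun j : ℕ => h ((j:ℝ)/((n:ℝ)+1))) j - (fun j : ℕ => h ((j:ℝ)/((n:ℝ)+1))) (j-1)) := by
      refine Finset.sum_congr rfl fun j hj => ?_
      rw [if_neg (not_base_of_mem_Ioc hj)]
    rw [hrest, telescope (fun j : ℕ => h ((j:ℝ)/((n:ℝ)+1))) (2^(lg k)) k hmk]
    ring
private noncomputable def py (A : ℕ → ℕ → ℂ) (x : ℕ →₀ ℂ) (p : ℕ × ℕ) (n : ℕ) : ℂ :=
  ∑ k ∈ x.support, pb p k * (A n k * x k)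

private noncomputable def pz (S A : ℕ → ℕ → ℂ) (x : ℕ →₀ ℂ) (n : ℕ) : ℂ :=
  ∑ k ∈ x.support, S n k * A n k * x k

private noncomputable def psig (x : ℕ →₀ ℂ) (p : ℕ × ℕ) : ℝ :=
  ∑ k ∈ x.support, (if pb p k = 0 then 0 else ‖x k‖^2)

private lemma pgam_pos (p : ℕ × ℕ) : 0 < pgam p := by unfold pgam; positivity

private lemma pc_nonneg (h0n L : ℝ) (hh : 0 ≤ h0n) (hL : 0 ≤ L) (p : ℕ × ℕ) :
    0 ≤ pc h0n L p := by
  unfold pc pbeta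
  split
  · split <;> simp [hh]
  · split
    · split
      · positivity
      · positivity
    · exact le_refl 0

private lemma extract_real (g : ℕ → ℝ) (hg : ∀ n, 0 ≤ g n) (Bd : ℝ) (hBd : 0 ≤ Bd)
    (hb : ∑' n, ENNReal.ofReal (g n) ≤ ENNReal.ofReal Bd) :
    Summable g ∧ (∑' n, g n) ≤ Bd := by
  have hne : (∑' n, ENNReal.ofReal (g n)) ≠ ⊤ := (lt_of_le_of_lt hb ENNReal.ofReal_lt_top).ne
  have hsum : Summable (fun n => (ENNReal.ofReal (g n)).toReal) := ENNReal.summable_toReal hne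
  have hgg : (fun n => (ENNReal.ofReal (g n)).toReal) = g := by
    funext n; exact ENNReal.toReal_ofReal (hg n)
  refine ⟨hgg ▸ hsum, ?_⟩
  have h1 : ∑' n, g n = (∑' n, ENNReal.ofReal (g n)).toReal := by
    rw [ENNReal.tsum_toReal_eq (fun n => ENNReal.ofReal_ne_top), hgg]
  rw [h1]
  calc (∑' n, ENNReal.ofReal (g n)).toReal ≤ (ENNReal.ofReal Bd).toReal :=
        ENNReal.toReal_mono ENNReal.ofReal_ne_top hb
    _ = Bd := ENNReal.toReal_ofReal hBd
-- L2 : z expansion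
private lemma pz_eq (h : ℝ → ℂ) (S A : ℕ → ℕ → ℂ)
    (hS : ∀ n k : ℕ, k ≤ n → S n k = h ((k:ℝ)/((n:ℝ)+1)))
    (hA : LowerTri A) (x : ℕ →₀ ℂ) (n : ℕ) :
    pz S A x n = ∑ p ∈ pF n, pa h p n * py A x p n := by
  unfold pz py
  calc ∑ k ∈ x.support, S n k * A n k * x k
      = ∑ k ∈ x.support, (∑ p ∈ pF n, pa h p n * pb p k) * (A n k * x k) := by
        refine Finset.sum_congr rfl fun k _ => ?_
        by_cases hkn : k ≤ n
        · rw [sum_ab h n k hkn, ← hS n k hkn]; ring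
        · rw [hA n k (by omega)]; ring
    _ = ∑ k ∈ x.support, ∑ p ∈ pF n, pa h p n * pb p k * (A n k * x k) := by
        refine Finset.sum_congr rfl fun k _ => ?_
        rw [Finset.sum_mul]
    _ = ∑ p ∈ pF n, ∑ k ∈ x.support, pa h p n * pb p k * (A n k * x k) := Finset.sum_comm
    _ = ∑ p ∈ pF n, pa h p n * ∑ k ∈ x.support, pb p k * (A n k * x k) := by
        refine Finset.sum_congr rfl fun p _ => ?_
        rw [Finset.mul_sum]
        refine Finset.sum_congr rfl fun k _ => ?_
        ring

-- L1 : entry bound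
private lemma pa_le (h : ℝ → ℂ) (L : ℝ) (hL0 : 0 ≤ L)
    (hlip : ∀ u v : ℝ, 0 ≤ u → u ≤ 1 → 0 ≤ v → v ≤ 1 → ‖h u - h v‖ ≤ L * |u - v|)
    (p : ℕ × ℕ) (n : ℕ) : ‖pa h p n‖ ≤ pc (‖h 0‖) L p := by
  obtain ⟨i, j⟩ := p
  unfold pa pc
  by_cases hj : j = 0
  · subst hj
    by_cases hi : i = 0 <;> simp [hi]
  · rw [if_neg hj, if_neg hj]
    by_cases hcond : i = lg (n+1) ∧ j ≤ n
    case neg =>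
      rw [if_neg hcond, norm_zero]
      by_cases hlg : lg j ≤ i
      · rw [if_pos hlg]; unfold pbeta; split
        · positivity
        · positivity
      · rw [if_neg hlg]
    case pos =>
      rw [if_pos hcond]
      obtain ⟨hieq, hjn⟩ := hcond
      have hlg : lg j ≤ i := by
        rw [hieq]; exact Nat.log_mono_right (by omega)
      rw [if_pos hlg]
      have hn1 : (0:ℝ) < (n:ℝ) + 1 := by positivity
      have hipow : ((n:ℝ)+1)⁻¹ ≤ (1/2:ℝ)^i := by
        rw [one_div, inv_pow]
        apply inv_anti₀ (by positivity)
        have hnat : (2:ℕ)^i ≤ n+1 := by rw [hieq]; exact Nat.pow_log_le_self 2 (Nat.succ_ne_zero n)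
        calc (2:ℝ)^i = ((2^i : ℕ) : ℝ) := by push_cast; ring
          _ ≤ ((n+1 : ℕ) : ℝ) := by exact_mod_cast hnat
          _ = (n:ℝ)+1 := by push_cast; ring
      have harg1 : 0 ≤ (j:ℝ)/((n:ℝ)+1) := by positivity
      have harg2 : (j:ℝ)/((n:ℝ)+1) ≤ 1 := by
        rw [div_le_one hn1]
        have : (j:ℝ) ≤ (n:ℝ) := by exact_mod_cast hjn
        linarith
      by_cases hb : j = 2^(lg j)
      · rw [if_pos hb]; unfold pbeta; rw [if_pos hb]
        calc ‖h ((j:ℝ)/((n:ℝ)+1)) - h 0‖ ≤ L * |(j:ℝ)/((n:ℝ)+1) - 0| :=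
              hlip _ 0 harg1 harg2 le_rfl zero_le_one
          _ = L * ((j:ℝ) * ((n:ℝ)+1)⁻¹) := by
              rw [sub_zero, abs_of_nonneg harg1, div_eq_mul_inv]
          _ ≤ L * ((j:ℝ) * (1/2:ℝ)^i) := by
              have : (j:ℝ) * ((n:ℝ)+1)⁻¹ ≤ (j:ℝ) * (1/2:ℝ)^i :=
                mul_le_mul_of_nonneg_left hipow (by positivity)
              exact mul_le_mul_of_nonneg_left this hL0
          _ = L * (j:ℝ) * (1/2:ℝ)^i := by ring
      · rw [if_neg hb]; unfold pbeta; rw [if_neg hb]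
        have hj1 : 1 ≤ j := by omega
        have hcast : ((j-1:ℕ):ℝ) = (j:ℝ) - 1 := by
          have := Nat.cast_sub (R := ℝ) hj1
          simpa using this
        have harg3 : 0 ≤ ((j-1:ℕ):ℝ)/((n:ℝ)+1) := by positivity
        have harg4 : ((j-1:ℕ):ℝ)/((n:ℝ)+1) ≤ 1 := by
          rw [div_le_one hn1, hcast]
          have : (j:ℝ) ≤ (n:ℝ) := by exact_mod_cast hjn
          linarith
        calc ‖h ((j:ℝ)/((n:ℝ)+1)) - h (((j-1:ℕ):ℝ)/((n:ℝ)+1))‖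
            ≤ L * |(j:ℝ)/((n:ℝ)+1) - ((j-1:ℕ):ℝ)/((n:ℝ)+1)| :=
              hlip _ _ harg1 harg2 harg3 harg4
          _ = L * ((n:ℝ)+1)⁻¹ := by
              rw [div_sub_div_same, hcast]
              rw [show (j:ℝ) - ((j:ℝ)-1) = 1 from by ring]
              rw [abs_of_nonneg (by positivity)]
              rw [one_div]
          _ ≤ L * (1/2:ℝ)^i := mul_le_mul_of_nonneg_left hipow hL0
          _ = L * 1 * (1/2:ℝ)^i := by ring
-- L3 : weighted column sums bound (Γ₁)
private lemma gam_sum_le (h0n L : ℝ) (hh : 0 ≤ h0n) (hL : 0 ≤ L) (n : ℕ) :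
    ∑ p ∈ pF n, pc h0n L p * pgam p ≤ h0n + 4 * L := by
  classical
  rw [pF, Finset.sum_insert (pF_notmem n), Finset.sum_product, Finset.sum_singleton]
  have h00 : pc h0n L (0,0) * pgam (0,0) = h0n := by
    unfold pc pgam
    norm_num
  rw [h00]
  set i := lg (n+1) with hi
  -- real bounds on 2^i
  have h2i_le : (2:ℝ)^i ≤ (n:ℝ)+1 := by
    have hnat : (2:ℕ)^i ≤ n+1 := Nat.pow_log_le_self 2 (Nat.succ_ne_zero n)
    calc (2:ℝ)^i = ((2^i : ℕ) : ℝ) := by push_cast; ring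
      _ ≤ ((n+1 : ℕ) : ℝ) := by exact_mod_cast hnat
      _ = (n:ℝ)+1 := by push_cast; ring
  have hn_le : (n:ℝ) ≤ (2:ℝ)^(i+1) := by
    have hnat : n + 1 < 2^(i+1) := Nat.lt_pow_succ_log_self (by norm_num) (n+1)
    have : (n:ℕ) ≤ 2^(i+1) := by omega
    calc (n:ℝ) = ((n:ℕ):ℝ) := by norm_num
      _ ≤ ((2^(i+1) : ℕ) : ℝ) := by exact_mod_cast this
      _ = (2:ℝ)^(i+1) := by push_cast; ring
  have hterm : ∀ j ∈ Finset.Icc 1 n, pc h0n L (i,j) * pgam (i,j)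
      ≤ L * (1/2:ℝ)^i + (if j = 2^(lg j) then L * (3/8:ℝ)^i * (8/3:ℝ)^(lg j) else 0) := by
    intro j hj
    rw [Finset.mem_Icc] at hj
    have hj0 : j ≠ 0 := by omega
    have hlgj : lg j ≤ i := by rw [hi]; exact Nat.log_mono_right (by omega)
    have hsplit : pgam (i,j) = (3/4:ℝ)^i * (4/3:ℝ)^(lg j) := by
      unfold pgam
      have e1 : (3/4:ℝ)^i = (3/4:ℝ)^(i - lg j) * (3/4:ℝ)^(lg j) := by
        rw [← pow_add, Nat.sub_add_cancel hlgj]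
      rw [e1, mul_assoc, ← mul_pow]
      norm_num
    unfold pc
    rw [if_neg hj0, if_pos hlgj, hsplit]
    by_cases hb : j = 2^(lg j)
    · rw [if_pos hb]
      unfold pbeta; rw [if_pos hb]
      have hjval : (j:ℝ) = (2:ℝ)^(lg j) := by
        have hcast : ((j:ℕ):ℝ) = ((2^(lg j) : ℕ) : ℝ) := by exact_mod_cast hb
        rw [hcast]; push_cast; ring
      have heq : L * (j:ℝ) * (1/2:ℝ)^i * ((3/4:ℝ)^i * (4/3:ℝ)^(lg j))
          = L * (3/8:ℝ)^i * (8/3:ℝ)^(lg j) := by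
        rw [hjval,
          show (3/8:ℝ)^i = (1/2:ℝ)^i*(3/4:ℝ)^i from by rw [← mul_pow]; norm_num,
          show (8/3:ℝ)^(lg j) = (2:ℝ)^(lg j)*(4/3:ℝ)^(lg j) from by rw [← mul_pow]; norm_num]
        ring
      rw [heq]
      have hnn : (0:ℝ) ≤ L * (1/2:ℝ)^i := by positivity
      linarith
    · rw [if_neg hb]
      unfold pbeta; rw [if_neg hb]
      have hle : (4/3:ℝ)^(lg j) ≤ (4/3:ℝ)^i := pow_le_pow_right₀ (by norm_num) hlgj
      calc L * 1 * (1/2:ℝ)^i * ((3/4:ℝ)^i * (4/3:ℝ)^(lg j))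
          ≤ L * 1 * (1/2:ℝ)^i * ((3/4:ℝ)^i * (4/3:ℝ)^i) := by
            apply mul_le_mul_of_nonneg_left _ (by positivity)
            exact mul_le_mul_of_nonneg_left hle (by positivity)
        _ = L * (1/2:ℝ)^i := by
            rw [show (3/4:ℝ)^i*(4/3:ℝ)^i = 1 from by rw [← mul_pow]; norm_num]
            ring
        _ ≤ L * (1/2:ℝ)^i + 0 := by linarith
  have hsum1 : ∑ j ∈ Finset.Icc 1 n, pc h0n L (i,j) * pgam (i,j)
      ≤ (n:ℝ) * (L * (1/2:ℝ)^i)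
        + ∑ j ∈ (Finset.Icc 1 n).filter (fun j => j = 2^(lg j)), L * (3/8:ℝ)^i * (8/3:ℝ)^(lg j) := by
    calc ∑ j ∈ Finset.Icc 1 n, pc h0n L (i,j) * pgam (i,j)
        ≤ ∑ j ∈ Finset.Icc 1 n,
          (L * (1/2:ℝ)^i + (if j = 2^(lg j) then L * (3/8:ℝ)^i * (8/3:ℝ)^(lg j) else 0)) :=
          Finset.sum_le_sum hterm
      _ = (n:ℝ) * (L * (1/2:ℝ)^i)
          + ∑ j ∈ (Finset.Icc 1 n).filter (fun j => j = 2^(lg j)), L * (3/8:ℝ)^i * (8/3:ℝ)^(lg j) := by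
          rw [Finset.sum_add_distrib, Finset.sum_const, Nat.card_Icc, Finset.sum_filter]
          simp only [Nat.add_sub_cancel, nsmul_eq_mul]
  have hbound1 : (n:ℝ) * (L * (1/2:ℝ)^i) ≤ 2 * L := by
    have hx : (n:ℝ) * (1/2:ℝ)^i ≤ 2 := by
      calc (n:ℝ) * (1/2:ℝ)^i ≤ (2:ℝ)^(i+1) * (1/2:ℝ)^i := by
            apply mul_le_mul_of_nonneg_right hn_le (by positivity)
        _ = 2 := by
            rw [pow_succ, show (2:ℝ)^i*2*(1/2:ℝ)^i = 2*((2:ℝ)^i*(1/2:ℝ)^i) from by ring,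
              ← mul_pow]
            norm_num
    nlinarith [hx, hL, pow_nonneg (by norm_num : (0:ℝ) ≤ 1/2) i, Nat.cast_nonneg (α := ℝ) n]
  have hbound2 : ∑ j ∈ (Finset.Icc 1 n).filter (fun j => j = 2^(lg j)),
      L * (3/8:ℝ)^i * (8/3:ℝ)^(lg j) ≤ (8/5) * L := by
    have hsub : (Finset.Icc 1 n).filter (fun j => j = 2^(lg j))
        ⊆ (Finset.range (i+1)).image (fun m => 2^m) := by
      intro j hj
      simp only [Finset.mem_filter, Finset.mem_Icc] at hj
      obtain ⟨⟨hj1, hjn⟩, hb⟩ := hj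
      refine Finset.mem_image.mpr ⟨lg j, Finset.mem_range.mpr ?_, hb.symm⟩
      have : lg j ≤ i := by rw [hi]; exact Nat.log_mono_right (by omega)
      omega
    have himg : ∑ j ∈ (Finset.range (i+1)).image (fun m => 2^m),
        L * (3/8:ℝ)^i * (8/3:ℝ)^(lg j)
        = ∑ m ∈ Finset.range (i+1), L * (3/8:ℝ)^i * (8/3:ℝ)^m := by
      rw [Finset.sum_image]
      · refine Finset.sum_congr rfl fun m _ => ?_
        have : lg (2^m) = m := Nat.log_pow (by norm_num) m
        rw [this]
      · intro a _ b _ hab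
        exact Nat.pow_right_injective (le_refl 2) hab
    calc ∑ j ∈ (Finset.Icc 1 n).filter (fun j => j = 2^(lg j)), L * (3/8:ℝ)^i * (8/3:ℝ)^(lg j)
        ≤ ∑ j ∈ (Finset.range (i+1)).image (fun m => 2^m), L * (3/8:ℝ)^i * (8/3:ℝ)^(lg j) :=
          Finset.sum_le_sum_of_subset_of_nonneg hsub (fun j _ _ => by positivity)
      _ = L * (3/8:ℝ)^i * ∑ m ∈ Finset.range (i+1), (8/3:ℝ)^m := by
          rw [himg, Finset.mul_sum]
      _ ≤ (8/5) * L := by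
          rw [geom_sum_eq (by norm_num : (8/3:ℝ) ≠ 1)]
          have hA : (0:ℝ) ≤ (3/8:ℝ)^i := by positivity
          have hAB : (3/8:ℝ)^i * (8/3:ℝ)^(i+1) = 8/3 := by
            rw [pow_succ, show (3/8:ℝ)^i*((8/3:ℝ)^i*(8/3)) = ((3/8:ℝ)*(8/3))^i*(8/3) from by
              rw [mul_pow]; ring]
            norm_num
          have hkey : (3/8:ℝ)^i * (((8/3:ℝ)^(i+1) - 1)/(8/3 - 1)) ≤ 8/5 := by
            have expand : (3/8:ℝ)^i * (((8/3:ℝ)^(i+1) - 1)/(8/3 - 1))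
                = ((3/8:ℝ)^i * (8/3:ℝ)^(i+1) - (3/8:ℝ)^i) * (3/5) := by
              field_simp; ring
            rw [expand, hAB]
            nlinarith [hA]
          calc L * (3/8:ℝ)^i * (((8/3:ℝ)^(i+1) - 1)/(8/3 - 1))
              = L * ((3/8:ℝ)^i * (((8/3:ℝ)^(i+1) - 1)/(8/3 - 1))) := by ring
            _ ≤ L * (8/5) := mul_le_mul_of_nonneg_left hkey hL
            _ = (8/5) * L := by ring
  calc h0n + ∑ j ∈ Finset.Icc 1 n, pc h0n L (i,j) * pgam (i,j)
      ≤ h0n + ((n:ℝ) * (L * (1/2:ℝ)^i)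
        + ∑ j ∈ (Finset.Icc 1 n).filter (fun j => j = 2^(lg j)), L * (3/8:ℝ)^i * (8/3:ℝ)^(lg j)) := by
        linarith [hsum1]
    _ ≤ h0n + (2*L + (8/5)*L) := by linarith [hbound1, hbound2]
    _ ≤ h0n + 4*L := by linarith
-- L4 : per-column tsum bound (Γ₂ / κ)
private lemma kappa_le (h0n L : ℝ) (hh : 0 ≤ h0n) (hL : 0 ≤ L) (k : ℕ) :
    (∑' p : ℕ×ℕ, ENNReal.ofReal (pc h0n L p / pgam p) * (if pb p k = 0 then 0 else 1))
      ≤ ENNReal.ofReal (h0n + 6 * L) := by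
  classical
  set G : ℕ → ℝ≥0∞ := fun j => ∑' i : ℕ,
      ENNReal.ofReal (pc h0n L (i,j) / pgam (i,j)) * (if pb (i,j) k = 0 then 0 else 1) with hG
  have hprod : (∑' p : ℕ×ℕ, ENNReal.ofReal (pc h0n L p / pgam p) * (if pb p k = 0 then 0 else 1))
      = ∑' j : ℕ, G j := by
    have e1 := ENNReal.tsum_prod (f := fun i j => ENNReal.ofReal (pc h0n L (i,j) / pgam (i,j)) *
            (if pb (i,j) k = 0 then 0 else 1))
    have e2 := ENNReal.tsum_comm (f := fun i j => ENNReal.ofReal (pc h0n L (i,j) / pgam (i,j)) *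
            (if pb (i,j) k = 0 then 0 else 1))
    exact e1.trans e2
  rw [hprod]
  have hG0 : G 0 = ENNReal.ofReal h0n := by
    rw [hG]
    have hone : ∀ i : ℕ, ENNReal.ofReal (pc h0n L (i,0) / pgam (i,0)) * (if pb (i,0) k = 0 then 0 else 1)
        = if i = 0 then ENNReal.ofReal h0n else 0 := by
      intro i
      have hpb : pb (i,0) k = 1 := by unfold pb; simp
      rw [hpb, if_neg (one_ne_zero), mul_one]
      unfold pc pgam
      by_cases hi : i = 0
      · subst hi; norm_num
      · simp [hi]
    simp only [hone]
    rw [tsum_eq_single 0 (fun i hi => by rw [if_neg hi])]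
    simp
  have hGin : ∀ j : ℕ, j ≠ 0 → ¬(j ≤ k ∧ k < 2^(lg j + 1)) → G j = 0 := by
    intro j hj hact
    rw [hG]
    have hzz : ∀ i : ℕ, ENNReal.ofReal (pc h0n L (i,j) / pgam (i,j)) * (if pb (i,j) k = 0 then 0 else 1) = 0 := by
      intro i
      have hpb : pb (i,j) k = 0 := by unfold pb; rw [if_neg hj, if_neg hact]
      rw [hpb, if_pos rfl, mul_zero]
    simp only [hzz]
    exact tsum_zero
  have hGval : ∀ j : ℕ, j ≠ 0 → G j ≤ ENNReal.ofReal (3 * (L * pbeta j * (1/2:ℝ)^(lg j))) := by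
    intro j hj
    rw [hG]
    have hterm_le : ∀ i, ENNReal.ofReal (pc h0n L (i,j) / pgam (i,j)) * (if pb (i,j) k = 0 then 0 else 1)
        ≤ ENNReal.ofReal (pc h0n L (i,j) / pgam (i,j)) := by
      intro i
      split
      · rw [mul_zero]; exact zero_le
      · rw [mul_one]
    refine le_trans (ENNReal.tsum_le_tsum hterm_le) ?_
    have hval : ∀ s : ℕ, pc h0n L (lg j + s, j) / pgam (lg j + s, j)
        = (L * pbeta j * (1/2:ℝ)^(lg j)) * (2/3:ℝ)^s := by
      intro s
      unfold pc pgam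
      dsimp only
      rw [if_neg hj, if_pos (Nat.le_add_right _ _)]
      simp only [Nat.add_sub_cancel_left]
      rw [pow_add, mul_div_assoc]
      have e3 : (1/2:ℝ)^(lg j) * (1/2:ℝ)^s / (3/4:ℝ)^s = (1/2:ℝ)^(lg j) * (2/3:ℝ)^s := by
        rw [mul_div_assoc, ← div_pow]; norm_num
      rw [e3]; ring
    have hzero : ∀ i : ℕ, i < lg j → pc h0n L (i,j) / pgam (i,j) = 0 := by
      intro i hi
      unfold pc
      dsimp only
      rw [if_neg hj, if_neg (by omega : ¬ lg j ≤ i)]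
      simp
    have hsupp : Function.support (fun i => ENNReal.ofReal (pc h0n L (i,j) / pgam (i,j)))
        ⊆ Set.range (fun s : ℕ => lg j + s) := by
      intro i hi
      rcases Nat.lt_or_ge i (lg j) with hlt | hge
      · exfalso; apply hi; dsimp only; rw [hzero i hlt]; simp
      · refine ⟨i - lg j, ?_⟩; dsimp only; omega
    have hinj : Function.Injective (fun s : ℕ => lg j + s) := fun a b hab => by
      simpa using hab
    rw [← hinj.tsum_eq hsupp]
    simp only [hval]
    have hconst : 0 ≤ L * pbeta j * (1/2:ℝ)^(lg j) := by
      unfold pbeta; split <;> positivity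
    calc ∑' s : ℕ, ENNReal.ofReal ((L * pbeta j * (1/2:ℝ)^(lg j)) * (2/3:ℝ)^s)
        = ∑' s : ℕ, ENNReal.ofReal (L * pbeta j * (1/2:ℝ)^(lg j)) * (ENNReal.ofReal (2/3:ℝ))^s := by
          refine tsum_congr fun s => ?_
          rw [ENNReal.ofReal_mul hconst, ENNReal.ofReal_pow (by norm_num)]
      _ = ENNReal.ofReal (L * pbeta j * (1/2:ℝ)^(lg j)) * (1 - ENNReal.ofReal (2/3:ℝ))⁻¹ := by
          rw [ENNReal.tsum_mul_left, ENNReal.tsum_geometric]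
      _ = ENNReal.ofReal (L * pbeta j * (1/2:ℝ)^(lg j)) * ENNReal.ofReal 3 := by
          congr 1
          have e1 : (1:ℝ≥0∞) - ENNReal.ofReal (2/3:ℝ) = ENNReal.ofReal (3⁻¹:ℝ) := by
            rw [← ENNReal.ofReal_one, ← ENNReal.ofReal_sub 1 (by norm_num : (0:ℝ) ≤ 2/3)]
            norm_num
          rw [e1, ENNReal.ofReal_inv_of_pos (by norm_num : (0:ℝ) < 3), inv_inv]
      _ = ENNReal.ofReal (3 * (L * pbeta j * (1/2:ℝ)^(lg j))) := by
          rw [← ENNReal.ofReal_mul hconst, mul_comm]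
      _ ≤ ENNReal.ofReal (3 * (L * pbeta j * (1/2:ℝ)^(lg j))) := le_rfl
  -- bounds for base and increment pieces
  have hGbase : G (2^(lg k)) ≤ ENNReal.ofReal (3*L) := by
    have hj : (2:ℕ)^(lg k) ≠ 0 := by positivity
    refine le_trans (hGval _ hj) (le_of_eq ?_)
    congr 1
    have hlg2 : lg (2^(lg k)) = lg k := Nat.log_pow (by norm_num) _
    have hbeta : pbeta (2^(lg k)) = (2:ℝ)^(lg k) := by
      unfold pbeta
      rw [if_pos (by rw [hlg2])]
      push_cast; ring
    rw [hbeta, hlg2,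
      show (3:ℝ) * (L * (2:ℝ)^(lg k) * (1/2:ℝ)^(lg k)) = 3*L*((2:ℝ)*(1/2))^(lg k) from by
        rw [mul_pow]; ring]
    norm_num
  have hGinc : ∀ j ∈ Finset.Ioc (2^(lg k)) k, G j ≤ ENNReal.ofReal (3*L*(1/2:ℝ)^(lg k)) := by
    intro j hj
    have hmem := Finset.mem_Ioc.mp hj
    have hj0 : j ≠ 0 := by
      have := Nat.one_le_two_pow (n := lg k); omega
    refine le_trans (hGval _ hj0) (le_of_eq ?_)
    congr 1
    have hbeta : pbeta j = 1 := by
      unfold pbeta; rw [if_neg (not_base_of_mem_Ioc hj)]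
    have hlgeq : lg j = lg k := lg_eq_of_mem_Icc (Finset.mem_Icc.mpr ⟨le_of_lt hmem.1, hmem.2⟩)
    rw [hbeta, hlgeq]; ring
  -- assemble outer sum
  have h0notin : (0:ℕ) ∉ Finset.Icc (2^(lg k)) k := by
    intro hmem
    rw [Finset.mem_Icc] at hmem
    have := Nat.one_le_two_pow (n := lg k); omega
  have hout : (∑' j : ℕ, G j) = ∑ j ∈ insert 0 (Finset.Icc (2^(lg k)) k), G j := by
    apply tsum_eq_sum
    intro j hj
    have hj0 : j ≠ 0 := fun hjj => hj (by rw [hjj]; exact Finset.mem_insert_self _ _)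
    apply hGin j hj0
    intro hact
    exact hj (Finset.mem_insert_of_mem (Finset.mem_Icc.mpr ((filter_cond_iff j k hj0).mp hact)))
  rw [hout, Finset.sum_insert h0notin, hG0]
  by_cases hk0 : k = 0
  · subst hk0
    have hemp : Finset.Icc (2^(lg 0)) 0 = ∅ := by
      apply Finset.Icc_eq_empty
      have := Nat.one_le_two_pow (n := lg 0); omega
    rw [hemp, Finset.sum_empty, add_zero]
    exact ENNReal.ofReal_le_ofReal (by linarith)
  · have hmk : 2^(lg k) ≤ k := Nat.pow_log_le_self 2 hk0
    rw [Finset.Icc_eq_cons_Ioc hmk, Finset.sum_cons]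
    have hcard : ((Finset.Ioc (2^(lg k)) k).card : ℝ≥0∞) ≤ ((2^(lg k) : ℕ) : ℝ≥0∞) := by
      rw [Nat.card_Ioc]
      have hklt : k < 2^(lg k + 1) := Nat.lt_pow_succ_log_self (by norm_num) k
      have hle : k - 2^(lg k) ≤ 2^(lg k) := by
        have h2 : (2:ℕ)^(lg k + 1) = 2 * 2^(lg k) := by ring
        omega
      exact_mod_cast hle
    have hIoc : ∑ j ∈ Finset.Ioc (2^(lg k)) k, G j ≤ ENNReal.ofReal (3*L) := by
      calc ∑ j ∈ Finset.Ioc (2^(lg k)) k, G j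
          ≤ (Finset.Ioc (2^(lg k)) k).card • ENNReal.ofReal (3*L*(1/2:ℝ)^(lg k)) :=
            Finset.sum_le_card_nsmul _ _ _ hGinc
        _ = ((Finset.Ioc (2^(lg k)) k).card : ℝ≥0∞) * ENNReal.ofReal (3*L*(1/2:ℝ)^(lg k)) := by
            rw [nsmul_eq_mul]
        _ ≤ ((2^(lg k) : ℕ) : ℝ≥0∞) * ENNReal.ofReal (3*L*(1/2:ℝ)^(lg k)) :=
            mul_le_mul_left hcard _
        _ = ENNReal.ofReal ((2:ℝ)^(lg k)) * ENNReal.ofReal (3*L*(1/2:ℝ)^(lg k)) := by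
            congr 1
            rw [show ((2:ℝ)^(lg k)) = (((2^(lg k):ℕ)):ℝ) from by push_cast; ring]
            exact (ENNReal.ofReal_natCast _).symm
        _ = ENNReal.ofReal ((2:ℝ)^(lg k) * (3*L*(1/2:ℝ)^(lg k))) :=
            (ENNReal.ofReal_mul (by positivity)).symm
        _ = ENNReal.ofReal (3*L) := by
            congr 1
            rw [show (2:ℝ)^(lg k) * (3*L*(1/2:ℝ)^(lg k)) = 3*L*((2:ℝ)*(1/2))^(lg k) from by
              rw [mul_pow]; ring]
            norm_num
    calc ENNReal.ofReal h0n + (G (2^(lg k)) + ∑ j ∈ Finset.Ioc (2^(lg k)) k, G j)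
        ≤ ENNReal.ofReal h0n + (ENNReal.ofReal (3*L) + ENNReal.ofReal (3*L)) :=
          add_le_add_right (add_le_add hGbase hIoc) _
      _ = ENNReal.ofReal (h0n + (3*L + 3*L)) := by
          rw [← ENNReal.ofReal_add (by positivity) (by positivity),
            ← ENNReal.ofReal_add hh (by positivity)]
      _ ≤ ENNReal.ofReal (h0n + 6*L) := ENNReal.ofReal_le_ofReal (by linarith)
-- main Schur multiplier lemma
private lemma main_schur (h : ℝ → ℂ) (L C : ℝ) (hL : 0 ≤ L)
    (hlip : ∀ u v : ℝ, 0 ≤ u → u ≤ 1 → 0 ≤ v → v ≤ 1 → ‖h u - h v‖ ≤ L * |u - v|)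
    (hC : ‖h 0‖ + 6 * L ≤ C)
    (S : ℕ → ℕ → ℂ) (hS : ∀ n k : ℕ, k ≤ n → S n k = h ((k:ℝ)/((n:ℝ)+1)))
    (A : ℕ → ℕ → ℂ) (M : ℝ) (hM : 0 ≤ M) (hA : LowerTri A) (hbd : MatBound 2 A M) :
    MatBound 2 (fun n k => S n k * A n k) (C * M) := by
  classical
  have hh0 : (0:ℝ) ≤ ‖h 0‖ := norm_nonneg _
  have hC0 : 0 ≤ C := le_trans (by positivity) hC
  intro x
  -- notation
  have hz_eq : ∀ n, pz S A x n = ∑ p ∈ pF n, pa h p n * py A x p n :=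
    pz_eq h S A hS hA x
  -- per-piece ℓ² bound from hbd
  have hy : ∀ p : ℕ×ℕ, (∑' n, ENNReal.ofReal (‖py A x p n‖^2))
      ≤ ENNReal.ofReal (M^2 * psig x p) := by
    intro p
    obtain ⟨hsum, hle⟩ := hbd (x.filter (fun k => pb p k ≠ 0))
    have hysupp : ∀ n, (∑ k ∈ (x.filter (fun k => pb p k ≠ 0)).support,
        A n k * (x.filter (fun k => pb p k ≠ 0)) k) = py A x p n := by
      intro n
      rw [Finsupp.support_filter, Finset.sum_filter]
      unfold py
      refine Finset.sum_congr rfl fun k _ => ?_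
      rcases pb_val p k with h0 | h1
      · rw [if_neg (by simp [h0]), h0, zero_mul]
      · rw [if_pos (by simp [h1]), h1, one_mul]
        rw [Finsupp.filter_apply_pos (fun k => pb p k ≠ 0) x (by simp [h1])]
    have hxval : ∑ k ∈ (x.filter (fun k => pb p k ≠ 0)).support,
        ‖(x.filter (fun k => pb p k ≠ 0)) k‖^2 = psig x p := by
      unfold psig
      rw [Finsupp.support_filter, Finset.sum_filter]
      refine Finset.sum_congr rfl fun k _ => ?_
      by_cases hbk : pb p k = 0
      · rw [if_neg (by simp [hbk]), if_pos hbk]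
      · rw [if_pos hbk, if_neg hbk, Finsupp.filter_apply_pos (fun k => pb p k ≠ 0) x hbk]
    -- convert rpow to pow
    have hsum2 : Summable (fun n => ‖py A x p n‖^2) := by
      have heq : (fun n : ℕ => ‖∑ k ∈ (x.filter (fun k => pb p k ≠ 0)).support,
          A n k * (x.filter (fun k => pb p k ≠ 0)) k‖ ^ (2:ℝ)) = fun n => ‖py A x p n‖^2 := by
        funext n; rw [hysupp n, rpow_two_eq]
      rw [← heq]; exact hsum
    have hle2 : ∑' n, ‖py A x p n‖^2 ≤ M^2 * psig x p := by
      have heq : (fun n : ℕ => ‖∑ k ∈ (x.filter (fun k => pb p k ≠ 0)).support,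
          A n k * (x.filter (fun k => pb p k ≠ 0)) k‖ ^ (2:ℝ)) = fun n => ‖py A x p n‖^2 := by
        funext n; rw [hysupp n, rpow_two_eq]
      calc ∑' n, ‖py A x p n‖^2
          = ∑' n : ℕ, ‖∑ k ∈ (x.filter (fun k => pb p k ≠ 0)).support,
              A n k * (x.filter (fun k => pb p k ≠ 0)) k‖ ^ (2:ℝ) := by rw [heq]
        _ ≤ M ^ (2:ℝ) * ∑ k ∈ (x.filter (fun k => pb p k ≠ 0)).support,
              ‖(x.filter (fun k => pb p k ≠ 0)) k‖ ^ (2:ℝ) := hle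
        _ = M^2 * psig x p := by
            rw [rpow_two_eq, ← hxval]
            congr 1
            exact Finset.sum_congr rfl fun k _ => rpow_two_eq _
    calc (∑' n, ENNReal.ofReal (‖py A x p n‖^2))
        = ENNReal.ofReal (∑' n, ‖py A x p n‖^2) :=
          (ENNReal.ofReal_tsum_of_nonneg (fun n => sq_nonneg _) hsum2).symm
      _ ≤ ENNReal.ofReal (M^2 * psig x p) := ENNReal.ofReal_le_ofReal hle2
  -- pointwise Cauchy-Schwarz
  have hcs : ∀ n, ‖pz S A x n‖^2
      ≤ C * (∑ p ∈ pF n, (‖pa h p n‖ / pgam p) * ‖py A x p n‖^2) := by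
    intro n
    have hzb : ‖pz S A x n‖ ≤ ∑ p ∈ pF n, Real.sqrt (‖pa h p n‖ * pgam p) *
        (Real.sqrt (‖pa h p n‖ / pgam p) * ‖py A x p n‖) := by
      calc ‖pz S A x n‖ = ‖∑ p ∈ pF n, pa h p n * py A x p n‖ := by rw [hz_eq n]
        _ ≤ ∑ p ∈ pF n, ‖pa h p n * py A x p n‖ := norm_sum_le _ _
        _ = ∑ p ∈ pF n, Real.sqrt (‖pa h p n‖ * pgam p) *
            (Real.sqrt (‖pa h p n‖ / pgam p) * ‖py A x p n‖) := by
            refine Finset.sum_congr rfl fun p _ => ?_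
            have hγ := pgam_pos p
            have hkey : Real.sqrt (‖pa h p n‖ * pgam p) * Real.sqrt (‖pa h p n‖ / pgam p)
                = ‖pa h p n‖ := by
              rw [← Real.sqrt_mul (mul_nonneg (norm_nonneg _) hγ.le)]
              rw [show ‖pa h p n‖ * pgam p * (‖pa h p n‖ / pgam p)
                  = ‖pa h p n‖^2 * (pgam p / pgam p) from by ring,
                div_self (ne_of_gt hγ), mul_one]
              exact Real.sqrt_sq (norm_nonneg _)
            have hre : Real.sqrt (‖pa h p n‖ * pgam p) *
                (Real.sqrt (‖pa h p n‖ / pgam p) * ‖py A x p n‖)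
                = ‖pa h p n‖ * ‖py A x p n‖ := by
              rw [← mul_assoc, hkey]
            rw [norm_mul, hre]
    have hcs2 := Finset.sum_mul_sq_le_sq_mul_sq (pF n)
      (fun p => Real.sqrt (‖pa h p n‖ * pgam p))
      (fun p => Real.sqrt (‖pa h p n‖ / pgam p) * ‖py A x p n‖)
    have hnn : (0:ℝ) ≤ ∑ p ∈ pF n, Real.sqrt (‖pa h p n‖ * pgam p) *
        (Real.sqrt (‖pa h p n‖ / pgam p) * ‖py A x p n‖) := by
      apply Finset.sum_nonneg; intro p _; positivity
    have h1 : ‖pz S A x n‖^2 ≤ (∑ p ∈ pF n, ‖pa h p n‖ * pgam p)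
        * (∑ p ∈ pF n, (‖pa h p n‖ / pgam p) * ‖py A x p n‖^2) := by
      calc ‖pz S A x n‖^2
          ≤ (∑ p ∈ pF n, Real.sqrt (‖pa h p n‖ * pgam p) *
              (Real.sqrt (‖pa h p n‖ / pgam p) * ‖py A x p n‖))^2 :=
            pow_le_pow_left₀ (norm_nonneg _) hzb 2
        _ ≤ (∑ p ∈ pF n, (Real.sqrt (‖pa h p n‖ * pgam p))^2)
            * (∑ p ∈ pF n, (Real.sqrt (‖pa h p n‖ / pgam p) * ‖py A x p n‖)^2) := hcs2
        _ = (∑ p ∈ pF n, ‖pa h p n‖ * pgam p)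
            * (∑ p ∈ pF n, (‖pa h p n‖ / pgam p) * ‖py A x p n‖^2) := by
            congr 1
            · refine Finset.sum_congr rfl fun p _ => ?_
              exact Real.sq_sqrt (mul_nonneg (norm_nonneg _) (pgam_pos p).le)
            · refine Finset.sum_congr rfl fun p _ => ?_
              rw [mul_pow, Real.sq_sqrt (div_nonneg (norm_nonneg _) (pgam_pos p).le)]
    have h2 : (∑ p ∈ pF n, ‖pa h p n‖ * pgam p) ≤ C := by
      calc ∑ p ∈ pF n, ‖pa h p n‖ * pgam p
          ≤ ∑ p ∈ pF n, pc (‖h 0‖) L p * pgam p :=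
            Finset.sum_le_sum fun p _ => mul_le_mul_of_nonneg_right
              (pa_le h L hL hlip p n) (le_of_lt (pgam_pos p))
        _ ≤ ‖h 0‖ + 4*L := gam_sum_le (‖h 0‖) L hh0 hL n
        _ ≤ C := by linarith
    have h3 : (0:ℝ) ≤ ∑ p ∈ pF n, (‖pa h p n‖ / pgam p) * ‖py A x p n‖^2 := by
      apply Finset.sum_nonneg; intro p _
      exact mul_nonneg (div_nonneg (norm_nonneg _) (pgam_pos p).le) (sq_nonneg _)
    exact le_trans h1 (mul_le_mul_of_nonneg_right h2 h3)
  -- main chain in ℝ≥0∞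
  set Sx : ℝ := ∑ k ∈ x.support, ‖x k‖^2 with hSx
  have hSx0 : 0 ≤ Sx := Finset.sum_nonneg fun _ _ => sq_nonneg _
  have hchain : (∑' n, ENNReal.ofReal (‖pz S A x n‖^2))
      ≤ ENNReal.ofReal ((C*M)^2 * Sx) := by
    have step1 : ∀ n, ENNReal.ofReal (‖pz S A x n‖^2)
        ≤ ENNReal.ofReal C * ∑' p : ℕ×ℕ,
          ENNReal.ofReal ((‖pa h p n‖ / pgam p) * ‖py A x p n‖^2) := by
      intro n
      have hV0 : ∀ p : ℕ×ℕ, 0 ≤ (‖pa h p n‖ / pgam p) * ‖py A x p n‖^2 := by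
        intro p
        exact mul_nonneg (div_nonneg (norm_nonneg _) (pgam_pos p).le) (sq_nonneg _)
      have e4 : (∑ p ∈ pF n, ENNReal.ofReal ((‖pa h p n‖ / pgam p) * ‖py A x p n‖^2))
          = ∑' p : ℕ×ℕ, ENNReal.ofReal ((‖pa h p n‖ / pgam p) * ‖py A x p n‖^2) := by
        refine (tsum_eq_sum ?_).symm
        intro p hp
        rw [pa_zero_off h n p hp]
        simp
      calc ENNReal.ofReal (‖pz S A x n‖^2)
          ≤ ENNReal.ofReal (C * ∑ p ∈ pF n, (‖pa h p n‖ / pgam p) * ‖py A x p n‖^2) :=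
            ENNReal.ofReal_le_ofReal (hcs n)
        _ = ENNReal.ofReal C * ENNReal.ofReal
            (∑ p ∈ pF n, (‖pa h p n‖ / pgam p) * ‖py A x p n‖^2) := ENNReal.ofReal_mul hC0
        _ = ENNReal.ofReal C * ∑ p ∈ pF n,
            ENNReal.ofReal ((‖pa h p n‖ / pgam p) * ‖py A x p n‖^2) := by
            rw [ENNReal.ofReal_sum_of_nonneg (fun p _ => hV0 p)]
        _ = ENNReal.ofReal C * ∑' p : ℕ×ℕ,
            ENNReal.ofReal ((‖pa h p n‖ / pgam p) * ‖py A x p n‖^2) := by rw [e4]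
    calc (∑' n, ENNReal.ofReal (‖pz S A x n‖^2))
        ≤ ∑' n, (ENNReal.ofReal C * ∑' p : ℕ×ℕ,
            ENNReal.ofReal ((‖pa h p n‖ / pgam p) * ‖py A x p n‖^2)) :=
          ENNReal.tsum_le_tsum step1
      _ = ENNReal.ofReal C * ∑' n, ∑' p : ℕ×ℕ,
            ENNReal.ofReal ((‖pa h p n‖ / pgam p) * ‖py A x p n‖^2) := ENNReal.tsum_mul_left
      _ = ENNReal.ofReal C * ∑' p : ℕ×ℕ, ∑' n,
            ENNReal.ofReal ((‖pa h p n‖ / pgam p) * ‖py A x p n‖^2) := by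
          rw [ENNReal.tsum_comm]
      _ ≤ ENNReal.ofReal C * ∑' p : ℕ×ℕ,
            ENNReal.ofReal (pc (‖h 0‖) L p / pgam p) * ENNReal.ofReal (M^2 * psig x p) := by
          apply mul_le_mul_right
          apply ENNReal.tsum_le_tsum
          intro p
          have hγ := pgam_pos p
          calc ∑' n, ENNReal.ofReal ((‖pa h p n‖ / pgam p) * ‖py A x p n‖^2)
              ≤ ∑' n, ENNReal.ofReal (pc (‖h 0‖) L p / pgam p) * ENNReal.ofReal (‖py A x p n‖^2) := by
                apply ENNReal.tsum_le_tsum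
                intro n
                rw [← ENNReal.ofReal_mul (div_nonneg (pc_nonneg (‖h 0‖) L hh0 hL p) (pgam_pos p).le)]
                apply ENNReal.ofReal_le_ofReal
                apply mul_le_mul_of_nonneg_right _ (sq_nonneg _)
                exact (div_le_div_iff_of_pos_right hγ).mpr (pa_le h L hL hlip p n)
            _ = ENNReal.ofReal (pc (‖h 0‖) L p / pgam p) * ∑' n, ENNReal.ofReal (‖py A x p n‖^2) :=
                ENNReal.tsum_mul_left
            _ ≤ ENNReal.ofReal (pc (‖h 0‖) L p / pgam p) * ENNReal.ofReal (M^2 * psig x p) :=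
                mul_le_mul_right (hy p) _
      _ = ENNReal.ofReal C * (ENNReal.ofReal (M^2) * ∑' p : ℕ×ℕ,
            ENNReal.ofReal (pc (‖h 0‖) L p / pgam p) * ENNReal.ofReal (psig x p)) := by
          congr 1
          rw [← ENNReal.tsum_mul_left]
          refine tsum_congr fun p => ?_
          rw [ENNReal.ofReal_mul (sq_nonneg M)]
          ring
      _ ≤ ENNReal.ofReal C * (ENNReal.ofReal (M^2) * (ENNReal.ofReal C * ENNReal.ofReal Sx)) := by
          apply mul_le_mul_right
          apply mul_le_mul_right
          -- the middle tsum bound via kappa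
          have hσ : ∀ p : ℕ×ℕ, ENNReal.ofReal (psig x p)
              = ∑ k ∈ x.support, (if pb p k = 0 then 0 else 1) * ENNReal.ofReal (‖x k‖^2) := by
            intro p
            unfold psig
            rw [ENNReal.ofReal_sum_of_nonneg (fun k _ => by split <;> positivity)]
            refine Finset.sum_congr rfl fun k _ => ?_
            split
            · simp
            · rw [one_mul]
          calc ∑' p : ℕ×ℕ, ENNReal.ofReal (pc (‖h 0‖) L p / pgam p) * ENNReal.ofReal (psig x p)
              = ∑' p : ℕ×ℕ, ∑ k ∈ x.support, ENNReal.ofReal (pc (‖h 0‖) L p / pgam p) *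
                  ((if pb p k = 0 then 0 else 1) * ENNReal.ofReal (‖x k‖^2)) := by
                refine tsum_congr fun p => ?_
                rw [hσ p, Finset.mul_sum]
            _ = ∑ k ∈ x.support, ∑' p : ℕ×ℕ, ENNReal.ofReal (pc (‖h 0‖) L p / pgam p) *
                  ((if pb p k = 0 then 0 else 1) * ENNReal.ofReal (‖x k‖^2)) :=
                Summable.tsum_finsetSum (fun _ _ => ENNReal.summable)
            _ = ∑ k ∈ x.support, (∑' p : ℕ×ℕ, ENNReal.ofReal (pc (‖h 0‖) L p / pgam p) *
                  (if pb p k = 0 then 0 else 1)) * ENNReal.ofReal (‖x k‖^2) := by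
                refine Finset.sum_congr rfl fun k _ => ?_
                rw [← ENNReal.tsum_mul_right]
                refine tsum_congr fun p => ?_
                ring
            _ ≤ ∑ k ∈ x.support, ENNReal.ofReal C * ENNReal.ofReal (‖x k‖^2) := by
                refine Finset.sum_le_sum fun k _ => ?_
                refine mul_le_mul_left ?_ _
                refine le_trans (kappa_le (‖h 0‖) L hh0 hL k) ?_
                exact ENNReal.ofReal_le_ofReal hC
            _ = ENNReal.ofReal C * ENNReal.ofReal Sx := by
                rw [← Finset.mul_sum, hSx,
                  ENNReal.ofReal_sum_of_nonneg (fun k _ => sq_nonneg _)]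
      _ = ENNReal.ofReal ((C*M)^2 * Sx) := by
          rw [← ENNReal.ofReal_mul hC0, ← ENNReal.ofReal_mul (sq_nonneg M),
            ← ENNReal.ofReal_mul hC0]
          congr 1
          ring
  -- extract to real statement
  have hBd0 : 0 ≤ (C*M)^2 * Sx := by positivity
  obtain ⟨hsumz, hlez⟩ := extract_real (fun n => ‖pz S A x n‖^2)
    (fun n => sq_nonneg _) ((C*M)^2 * Sx) hBd0 hchain
  constructor
  · have heq : (fun n : ℕ => ‖∑ k ∈ x.support, (fun n k => S n k * A n k) n k * x k‖ ^ (2:ℝ))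
        = fun n => ‖pz S A x n‖^2 := by
      funext n; rw [rpow_two_eq]; rfl
    rw [heq]; exact hsumz
  · have heq : (fun n : ℕ => ‖∑ k ∈ x.support, (fun n k => S n k * A n k) n k * x k‖ ^ (2:ℝ))
        = fun n => ‖pz S A x n‖^2 := by
      funext n; rw [rpow_two_eq]; rfl
    calc ∑' n : ℕ, ‖∑ k ∈ x.support, (fun n k => S n k * A n k) n k * x k‖ ^ (2:ℝ)
        = ∑' n, ‖pz S A x n‖^2 := by rw [heq]
      _ ≤ (C*M)^2 * Sx := hlez
      _ = (C*M)^(2:ℝ) * ∑ k ∈ x.support, ‖x k‖ ^ (2:ℝ) := by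
          rw [rpow_two_eq, hSx]
          congr 1
          exact Finset.sum_congr rfl fun k _ => (rpow_two_eq _).symm
private lemma fejer_lip (N : ℕ) : ∀ u v : ℝ, 0 ≤ u → u ≤ 1 → 0 ≤ v → v ≤ 1 →
    ‖(((1 - u : ℝ)) : ℂ) ^ N - (((1 - v : ℝ)) : ℂ) ^ N‖ ≤ (N:ℝ) * |u - v| := by
  intro u v hu0 hu1 hv0 hv1
  have hcast : (((1 - u : ℝ)) : ℂ) ^ N - (((1 - v : ℝ)) : ℂ) ^ N
      = ((( (1-u)^N - (1-v)^N : ℝ)) : ℂ) := by push_cast; ring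
  rw [hcast, Complex.norm_real]
  calc |(1-u)^N - (1-v)^N| ≤ (N:ℝ) * |(1-u) - (1-v)| :=
        pow_lip N (1-u) (1-v) (by linarith) (by linarith) (by linarith) (by linarith)
    _ = (N:ℝ) * |u - v| := by rw [show (1-u) - (1-v) = -(u - v) from by ring, abs_neg]

private lemma schurNormLT_nonneg (S : ℕ → ℕ → ℂ) : 0 ≤ schurNormLT S :=
  Real.sInf_nonneg (fun _ hC => hC.1)

private lemma fejer_norm_le (N : ℕ) : schurNormLT (fejerPow N) ≤ 1 + 6 * N := by
  apply csInf_le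
  · exact ⟨0, fun C hC => hC.1⟩
  · constructor
    · positivity
    · intro A M hM hLT hMB
      exact main_schur (fun t : ℝ => (((1 - t : ℝ)) : ℂ) ^ N) (N:ℝ) (1 + 6*(N:ℝ))
        (Nat.cast_nonneg N) (fejer_lip N)
        (by simp)
        (fejerPow N)
        (fun n k hkn => by unfold fejerPow; rw [if_pos hkn])
        A M hM hLT hMB

private lemma fejer_limsup :
    Filter.limsup (fun N : ℕ => schurNormLT (fejerPow N) ^ ((N : ℝ)⁻¹))
        Filter.atTop ≤ 1 := by
  have hle : ∀ N : ℕ, schurNormLT (fejerPow N) ^ ((N : ℝ)⁻¹)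
      ≤ ((1 + 6*N : ℝ)) ^ ((N : ℝ)⁻¹) := fun N =>
    Real.rpow_le_rpow (schurNormLT_nonneg _) (fejer_norm_le N) (by positivity)
  have hu0 : ∀ N : ℕ, 0 ≤ schurNormLT (fejerPow N) ^ ((N : ℝ)⁻¹) := fun N =>
    Real.rpow_nonneg (schurNormLT_nonneg _) _
  have hlog : Filter.Tendsto (fun N : ℕ => Real.log (1 + 6*N) * (N:ℝ)⁻¹)
      Filter.atTop (nhds 0) := by
    have hupper : Filter.Tendsto (fun N : ℕ => (Real.log 7 + Real.log N) / (N:ℝ))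
        Filter.atTop (nhds 0) := by
      have h1 : Filter.Tendsto (fun N : ℕ => Real.log 7 / (N:ℝ)) Filter.atTop (nhds 0) :=
        tendsto_const_div_atTop_nhds_zero_nat _
      have h2 : Filter.Tendsto (fun x : ℝ => Real.log x / x) Filter.atTop (nhds 0) :=
        Real.isLittleO_log_id_atTop.tendsto_div_nhds_zero
      have h3 : Filter.Tendsto (fun N : ℕ => Real.log N / (N:ℝ)) Filter.atTop (nhds 0) :=
        h2.comp tendsto_natCast_atTop_atTop
      have h4 := h1.add h3
      simp only [add_zero] at h4
      refine h4.congr fun N => ?_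
      rw [← add_div]
    apply tendsto_of_tendsto_of_tendsto_of_le_of_le' tendsto_const_nhds hupper
    · filter_upwards [Filter.eventually_ge_atTop 1] with N hN
      have hN1 : (1:ℝ) ≤ (N:ℝ) := by exact_mod_cast hN
      have : (0:ℝ) ≤ Real.log (1 + 6*N) := Real.log_nonneg (by nlinarith)
      positivity
    · filter_upwards [Filter.eventually_ge_atTop 1] with N hN
      have hN1 : (1:ℝ) ≤ (N:ℝ) := by exact_mod_cast hN
      have hNpos : (0:ℝ) < (N:ℝ) := by linarith
      have hlogle : Real.log (1 + 6*N) ≤ Real.log 7 + Real.log N := by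
        rw [← Real.log_mul (by norm_num) (by linarith)]
        apply Real.log_le_log (by positivity)
        nlinarith
      rw [mul_comm, ← div_eq_inv_mul]
      gcongr
  have hv : Filter.Tendsto (fun N : ℕ => ((1 + 6*N : ℝ)) ^ ((N : ℝ)⁻¹))
      Filter.atTop (nhds 1) := by
    have heq : (fun N : ℕ => ((1 + 6*N : ℝ)) ^ ((N : ℝ)⁻¹))
        = fun N : ℕ => Real.exp (Real.log (1 + 6*N) * (N:ℝ)⁻¹) := by
      funext N
      rw [Real.rpow_def_of_pos (by positivity)]
    rw [heq]
    have := (Real.continuous_exp.tendsto 0).comp hlog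
    simpa [Function.comp_def] using this
  have h2 : Filter.limsup (fun N : ℕ => schurNormLT (fejerPow N) ^ ((N : ℝ)⁻¹)) Filter.atTop
      ≤ Filter.limsup (fun N : ℕ => ((1 + 6*N : ℝ)) ^ ((N : ℝ)⁻¹)) Filter.atTop :=
    Filter.limsup_le_limsup (Filter.Eventually.of_forall hle)
      (Filter.isCoboundedUnder_le_of_eventually_le Filter.atTop (x := 0)
        (Filter.Eventually.of_forall hu0))
      hv.isBoundedUnder_le
  exact h2.trans hv.limsup_eq.le


/-- The spectral radius of the Fejér matrix `𝓕` in the Banach algebra `𝒮_2^L` is at most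
`1` (via the spectral radius formula applied to Hadamard powers); consequently, for every
`λ` with `Re λ > 0`, `(λ+1)𝟙_L − 𝓕` is invertible in `𝒮_2^L`, with inverse the matrix
`((n+1)/(k + λ(n+1)))_{0≤k≤n}`: this inverse is a Schur multiplier for lower triangular
operators and is the entrywise reciprocal of `(λ+1)𝟙_L − 𝓕` on the lower triangle. -/
theorem fejer_spectral_radius_and_inverse :
    (Filter.limsup (fun N : ℕ => schurNormLT (fejerPow N) ^ ((N : ℝ)⁻¹))
        Filter.atTop ≤ 1) ∧
    ∀ lam : ℂ, 0 < lam.re →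
      IsSchurMultLT 2
        (fun n k => if k ≤ n then ((n : ℂ) + 1) / ((k : ℂ) + lam * ((n : ℂ) + 1)) else 0) ∧
      ∀ n k : ℕ, k ≤ n →
        ((lam + 1) - (1 - (k : ℂ) / ((n : ℂ) + 1))) *
            (((n : ℂ) + 1) / ((k : ℂ) + lam * ((n : ℂ) + 1))) = 1 := by
  constructor
  · exact fejer_limsup
  · intro lam hre
    have hone : ∀ n : ℕ, ((n:ℂ)+1) ≠ 0 := by
      intro n
      have h1 : ((n+1:ℕ):ℂ) ≠ 0 := Nat.cast_ne_zero.mpr (Nat.succ_ne_zero n)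
      push_cast at h1
      exact h1
    have hden : ∀ n k : ℕ, ((k:ℂ) + lam * ((n:ℂ)+1)) ≠ 0 := by
      intro n k hzero
      have h1 := congrArg Complex.re hzero
      simp only [Complex.add_re, Complex.mul_re, Complex.natCast_re, Complex.add_im,
        Complex.natCast_im, Complex.one_re, Complex.one_im, Complex.zero_re] at h1
      nlinarith [Nat.cast_nonneg (α := ℝ) k, Nat.cast_nonneg (α := ℝ) n, hre]
    constructor
    · -- Schur multiplier
      intro A hLT hB
      obtain ⟨M, hM, hMB⟩ := hB
      have hlam_ne : ∀ t : ℝ, 0 ≤ t → lam + (t:ℂ) ≠ 0 := by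
        intro t ht hzero
        have h1 := congrArg Complex.re hzero
        simp only [Complex.add_re, Complex.ofReal_re, Complex.zero_re] at h1
        linarith
      have hnorm_ge : ∀ t : ℝ, 0 ≤ t → lam.re ≤ ‖lam + (t:ℂ)‖ := by
        intro t ht
        calc lam.re ≤ (lam + (t:ℂ)).re := by
              simp only [Complex.add_re, Complex.ofReal_re]; linarith
          _ ≤ |(lam + (t:ℂ)).re| := le_abs_self _
          _ ≤ ‖lam + (t:ℂ)‖ := by
              exact Complex.abs_re_le_norm _
      set L : ℝ := (lam.re)⁻¹ * (lam.re)⁻¹ with hLdef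
      have hL0 : 0 ≤ L := by positivity
      have hlip : ∀ u v : ℝ, 0 ≤ u → u ≤ 1 → 0 ≤ v → v ≤ 1 →
          ‖(lam + (u:ℂ))⁻¹ - (lam + (v:ℂ))⁻¹‖ ≤ L * |u - v| := by
        intro u v hu0 hu1 hv0 hv1
        have hiu := hlam_ne u hu0
        have hiv := hlam_ne v hv0
        have hid : (lam + (u:ℂ))⁻¹ - (lam + (v:ℂ))⁻¹
            = ((v:ℂ) - (u:ℂ)) * ((lam + (u:ℂ))⁻¹ * (lam + (v:ℂ))⁻¹) := by
          field_simp
          ring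
        rw [hid, norm_mul, norm_mul, norm_inv, norm_inv]
        have hvu : ‖(v:ℂ) - (u:ℂ)‖ = |u - v| := by
          rw [show (v:ℂ) - (u:ℂ) = (((v - u : ℝ)):ℂ) from by push_cast; ring,
            Complex.norm_real, Real.norm_eq_abs, abs_sub_comm]
        rw [hvu]
        have hinvu : ‖lam + (u:ℂ)‖⁻¹ ≤ (lam.re)⁻¹ :=
          inv_anti₀ hre (hnorm_ge u hu0)
        have hinvv : ‖lam + (v:ℂ)‖⁻¹ ≤ (lam.re)⁻¹ :=
          inv_anti₀ hre (hnorm_ge v hv0)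
        calc |u - v| * (‖lam + (u:ℂ)‖⁻¹ * ‖lam + (v:ℂ)‖⁻¹)
            ≤ |u - v| * ((lam.re)⁻¹ * (lam.re)⁻¹) := by
              apply mul_le_mul_of_nonneg_left _ (abs_nonneg _)
              exact mul_le_mul hinvu hinvv (by positivity) (by positivity)
          _ = L * |u - v| := by rw [hLdef]; ring
      have hS : ∀ n k : ℕ, k ≤ n →
          (fun n k : ℕ => if k ≤ n then ((n : ℂ) + 1) / ((k : ℂ) + lam * ((n : ℂ) + 1)) else 0) n k
            = (fun t : ℝ => (lam + (t:ℂ))⁻¹) ((k:ℝ)/((n:ℝ)+1)) := by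
        intro n k hkn
        simp only [if_pos hkn]
        have hcast : ((((k:ℝ)/((n:ℝ)+1)) : ℝ) : ℂ) = (k:ℂ)/((n:ℂ)+1) := by push_cast; ring
        rw [hcast]
        have hmul : (lam + (k:ℂ)/((n:ℂ)+1)) * (((n:ℂ)+1)/((k:ℂ)+lam*((n:ℂ)+1))) = 1 := by
          field_simp [hone n, hden n k]
          ring
        exact (inv_eq_of_mul_eq_one_right hmul).symm
      refine ⟨(‖(lam + ((0:ℝ):ℂ))⁻¹‖ + 6*L) * M, mul_nonneg (by positivity) hM, ?_⟩
      exact main_schur (fun t : ℝ => (lam + (t:ℂ))⁻¹) L (‖(lam + ((0:ℝ):ℂ))⁻¹‖ + 6*L)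
        hL0 hlip le_rfl _ hS A M hM hLT hMB
    · intro n k hkn
      have h1 := hden n k
      have h2 := hone n
      field_simp [h1, h2]
      ring
end
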